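/- arXiv:1311.0333 — 6 statements merged into one kernel-verified Lean document; each statement's English description precedes it below -/
import Mathlib

section
/- Let ε be a real number with 0 < ε < 1, let n = ⌈3/ε⌉, and let F_ε be the family of semi-open intervals B_a = [a/n, (a+1)/n) for integers 0 ≤ a < n. Then for any finite sequence ξ⃗ = (ξ₁,…,ξ_N) of real numbers in [0,1], if D(F_ε, ξ⃗) < (ε/3)² then D(ξ⃗) < ε. -/
open Finset

/- `seqDisc ξ` is the discrepancy of a finite sequence of reals:
`D(ξ) = sup_{0 ≤ u < v ≤ 1} |#{n : u ≤ ξ n < v}/N − (v−u)|`. -/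
open Classical in
noncomputable def seqDisc {N : ℕ} (ξ : Fin N → ℝ) : ℝ :=
  sSup { d : ℝ | ∃ u v : ℝ, 0 ≤ u ∧ u < v ∧ v ≤ 1 ∧
    d = |((Finset.univ.filter fun n : Fin N => u ≤ ξ n ∧ ξ n < v).card : ℝ) / N - (v - u)| }

open Classical in
lemma key_count {N n : ℕ} (hN : 0 < N) (hn : 0 < n)
    (ξ : Fin N → ℝ) (hξ : ∀ i, ξ i ∈ Set.Icc (0 : ℝ) 1) (M : ℝ)
    (hM : ∀ a : ℕ, a < n →
      |((Finset.univ.filter fun i : Fin N =>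
            (a : ℝ) / (n : ℝ) ≤ ξ i ∧ ξ i < ((a : ℝ) + 1) / (n : ℝ)).card : ℝ) / N
          - 1 / (n : ℝ)| ≤ M)
    (u v : ℝ) (hu : 0 ≤ u) (huv : u < v) (hv : v ≤ 1) :
    |((Finset.univ.filter fun i : Fin N => u ≤ ξ i ∧ ξ i < v).card : ℝ) / N - (v - u)|
      ≤ 2 / (n : ℝ) + (n : ℝ) * M := by
  have hNpos : (0:ℝ) < N := by exact_mod_cast hN
  have hnpos : (0:ℝ) < n := by exact_mod_cast hn
  have hM0 : 0 ≤ M := le_trans (abs_nonneg _) (hM 0 hn)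
  set bin : ℕ → Finset (Fin N) :=
    fun a => Finset.univ.filter fun i : Fin N =>
      (a : ℝ) / (n : ℝ) ≤ ξ i ∧ ξ i < ((a : ℝ) + 1) / (n : ℝ) with hbin
  set T : Finset (Fin N) := Finset.univ.filter fun i : Fin N => u ≤ ξ i ∧ ξ i < v with hTdef
  have hbinM : ∀ a : ℕ, a < n →
      1/(n:ℝ) - M ≤ ((bin a).card : ℝ)/N ∧ ((bin a).card:ℝ)/N ≤ 1/(n:ℝ) + M := by
    intro a ha
    have h2 := abs_le.mp (hM a ha)
    exact ⟨by linarith [h2.1], by linarith [h2.2]⟩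
  -- upper bound
  set S2 : Finset ℕ := (range n).filter
    (fun a => (a:ℝ)/(n:ℝ) < v ∧ u < ((a:ℝ)+1)/(n:ℝ)) with hS2def
  have hTsub : T ⊆ S2.biUnion bin := by
    intro i hi
    rw [hTdef, mem_filter] at hi
    obtain ⟨-, h1, h2⟩ := hi
    have hx0 : 0 ≤ ξ i := (hξ i).1
    have hx1 : ξ i < 1 := lt_of_lt_of_le h2 hv
    set a := ⌊ξ i * n⌋₊ with hadef
    have han : (a:ℝ) ≤ ξ i * n := Nat.floor_le (mul_nonneg hx0 hnpos.le)
    have han2 : ξ i * n < (a:ℝ) + 1 := Nat.lt_floor_add_one _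
    have haln : a < n := by
      rw [hadef]
      exact Nat.floor_lt (mul_nonneg hx0 hnpos.le) |>.mpr (by nlinarith)
    have hb1 : (a:ℝ)/(n:ℝ) ≤ ξ i := by rw [div_le_iff₀ hnpos]; linarith
    have hb2 : ξ i < ((a:ℝ)+1)/(n:ℝ) := by rw [lt_div_iff₀ hnpos]; linarith
    refine Finset.mem_biUnion.mpr ⟨a, ?_, ?_⟩
    · rw [hS2def, mem_filter, mem_range]
      exact ⟨haln, lt_of_le_of_lt hb1 h2, lt_of_le_of_lt h1 hb2⟩
    · rw [hbin]; simp only [mem_filter, mem_univ, true_and]; exact ⟨hb1, hb2⟩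
  have hcardT : (T.card : ℝ) ≤ ∑ a ∈ S2, ((bin a).card : ℝ) := by
    have : T.card ≤ ∑ a ∈ S2, (bin a).card :=
      le_trans (card_le_card hTsub) card_biUnion_le
    exact_mod_cast this
  have hS2n : (S2.card : ℝ) ≤ (n:ℝ) := by
    exact_mod_cast (card_filter_le _ _).trans (card_range n).le
  have hS2sub : S2 ⊆ Finset.Ico ⌊u*n⌋₊ ⌈v*n⌉₊ := by
    intro a ha
    rw [hS2def, mem_filter, mem_range] at ha
    obtain ⟨han, hav, hua⟩ := ha
    rw [Finset.mem_Ico]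
    constructor
    · have h1 : (⌊u*n⌋₊ : ℝ) < (a:ℝ) + 1 := by
        calc (⌊u*n⌋₊:ℝ) ≤ u*n := Nat.floor_le (mul_nonneg hu hnpos.le)
        _ < (a:ℝ)+1 := by rw [lt_div_iff₀ hnpos] at hua; linarith
      have h2 : ⌊u*n⌋₊ < a + 1 := by exact_mod_cast h1
      omega
    · apply Nat.lt_ceil.mpr
      rw [div_lt_iff₀ hnpos] at hav
      exact_mod_cast hav
  have hcardS2 : (S2.card : ℝ) < (v-u)*n + 2 := by
    have h1 : (S2.card : ℝ) ≤ ((Finset.Ico ⌊u*n⌋₊ ⌈v*n⌉₊).card : ℝ) := by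
      exact_mod_cast card_le_card hS2sub
    rw [Nat.card_Ico] at h1
    have hceil : (⌈v*n⌉₊:ℝ) < v*n + 1 :=
      Nat.ceil_lt_add_one (mul_nonneg (hu.trans huv.le) hnpos.le)
    have hfloor : u*n - 1 < (⌊u*n⌋₊:ℝ) := Nat.sub_one_lt_floor _
    by_cases hc : ⌊u*n⌋₊ ≤ ⌈v*n⌉₊
    · rw [Nat.cast_sub hc] at h1
      linarith
    · have h0 : ⌈v*n⌉₊ - ⌊u*n⌋₊ = 0 := Nat.sub_eq_zero_of_le (le_of_not_ge hc)
      rw [h0] at h1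
      simp only [Nat.cast_zero] at h1
      have h3 : (0:ℝ) ≤ (S2.card:ℝ) := Nat.cast_nonneg _
      nlinarith [mul_pos (sub_pos.mpr huv) hnpos]
  have hub : (T.card:ℝ)/N - (v-u) ≤ 2/(n:ℝ) + (n:ℝ)*M := by
    have e1 : (T.card:ℝ)/N ≤ (S2.card:ℝ) * (1/(n:ℝ) + M) := by
      calc (T.card:ℝ)/N ≤ (∑ a ∈ S2, ((bin a).card : ℝ))/N :=
            (div_le_div_iff_of_pos_right hNpos).mpr hcardT
        _ = ∑ a ∈ S2, ((bin a).card : ℝ)/N := Finset.sum_div _ _ _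
        _ ≤ ∑ a ∈ S2, (1/(n:ℝ) + M) := by
            apply Finset.sum_le_sum
            intro a ha
            rw [hS2def, mem_filter, mem_range] at ha
            exact (hbinM a ha.1).2
        _ = (S2.card:ℝ) * (1/(n:ℝ) + M) := by rw [Finset.sum_const, nsmul_eq_mul]
    have e2 : (S2.card:ℝ) * (1/(n:ℝ)) ≤ ((v-u)*n + 2) * (1/(n:ℝ)) :=
      mul_le_mul_of_nonneg_right hcardS2.le (by positivity)
    have e3 : ((v-u)*n + 2) * (1/(n:ℝ)) = (v-u) + 2/(n:ℝ) := by field_simp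
    have e4 : (S2.card:ℝ) * M ≤ (n:ℝ) * M := mul_le_mul_of_nonneg_right hS2n hM0
    nlinarith
  -- lower bound
  set S1 : Finset ℕ := (range n).filter
    (fun a => u ≤ (a:ℝ)/(n:ℝ) ∧ ((a:ℝ)+1)/(n:ℝ) ≤ v) with hS1def
  have hdisjgen : ∀ a b : ℕ, a < b → Disjoint (bin a) (bin b) := by
    intro a b hab
    rw [Finset.disjoint_left]
    intro i hia hib
    rw [hbin] at hia hib
    simp only [mem_filter, mem_univ, true_and] at hia hib
    have h1 : (a:ℝ) + 1 ≤ (b:ℝ) := by exact_mod_cast hab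
    have h2 : ((a:ℝ)+1)/(n:ℝ) ≤ (b:ℝ)/(n:ℝ) := (div_le_div_iff_of_pos_right hnpos).mpr h1
    linarith [hia.2, hib.1]
  have hdisj : ∀ a ∈ S1, ∀ b ∈ S1, a ≠ b → Disjoint (bin a) (bin b) := by
    intro a _ b _ hab
    rcases Nat.lt_or_ge a b with h | h
    · exact hdisjgen a b h
    · exact (hdisjgen b a (by omega)).symm
  have hUsub : S1.biUnion bin ⊆ T := by
    intro i hi
    obtain ⟨a, ha, hia⟩ := Finset.mem_biUnion.mp hi
    rw [hS1def, mem_filter, mem_range] at ha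
    rw [hbin] at hia; simp only [mem_filter, mem_univ, true_and] at hia
    rw [hTdef, mem_filter]
    exact ⟨mem_univ i, le_trans ha.2.1 hia.1, lt_of_lt_of_le hia.2 ha.2.2⟩
  have hcardT1 : ∑ a ∈ S1, ((bin a).card : ℝ) ≤ (T.card : ℝ) := by
    have h1 : ∑ a ∈ S1, (bin a).card ≤ T.card := by
      rw [← Finset.card_biUnion hdisj]; exact card_le_card hUsub
    exact_mod_cast h1
  have hS1n : (S1.card : ℝ) ≤ (n:ℝ) := by
    exact_mod_cast (card_filter_le _ _).trans (card_range n).le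
  have hS1sup : Finset.Ico ⌈u*n⌉₊ ⌊v*n⌋₊ ⊆ S1 := by
    intro a ha
    rw [Finset.mem_Ico] at ha
    have hvn : (⌊v*n⌋₊:ℝ) ≤ (n:ℝ) := by
      calc (⌊v*n⌋₊:ℝ) ≤ v*n := Nat.floor_le (mul_nonneg (hu.trans huv.le) hnpos.le)
        _ ≤ n := by nlinarith
    rw [hS1def, mem_filter, mem_range]
    refine ⟨?_, ?_, ?_⟩
    · have h1 : (a:ℝ) < (⌊v*n⌋₊:ℝ) := by exact_mod_cast ha.2
      have h2 : (a:ℝ) < (n:ℝ) := lt_of_lt_of_le h1 hvn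
      exact_mod_cast h2
    · rw [le_div_iff₀ hnpos]
      calc u * n ≤ (⌈u*n⌉₊:ℝ) := Nat.le_ceil _
        _ ≤ (a:ℝ) := by exact_mod_cast ha.1
    · rw [div_le_iff₀ hnpos]
      calc (a:ℝ)+1 ≤ (⌊v*n⌋₊:ℝ) := by exact_mod_cast Nat.succ_le_of_lt ha.2
        _ ≤ v*n := Nat.floor_le (mul_nonneg (hu.trans huv.le) hnpos.le)
  have hcardS1 : (v-u)*(n:ℝ) - 2 < (S1.card : ℝ) := by
    have h1 : ((Finset.Ico ⌈u*n⌉₊ ⌊v*n⌋₊).card : ℝ) ≤ (S1.card : ℝ) := by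
      exact_mod_cast card_le_card hS1sup
    rw [Nat.card_Ico] at h1
    have hfl : v*n - 1 < (⌊v*n⌋₊:ℝ) := Nat.sub_one_lt_floor _
    have hcl : (⌈u*n⌉₊:ℝ) < u*n + 1 := Nat.ceil_lt_add_one (mul_nonneg hu hnpos.le)
    by_cases hc : ⌈u*n⌉₊ ≤ ⌊v*n⌋₊
    · rw [Nat.cast_sub hc] at h1
      linarith
    · push_neg at hc
      have h2 : (⌊v*n⌋₊:ℝ) + 1 ≤ (⌈u*n⌉₊:ℝ) := by exact_mod_cast hc
      have h3 : (0:ℝ) ≤ (S1.card:ℝ) := Nat.cast_nonneg _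
      linarith [mul_pos (sub_pos.mpr huv) hnpos]
  have hlb : (v-u) - (T.card:ℝ)/N ≤ 2/(n:ℝ) + (n:ℝ)*M := by
    have e1 : (S1.card:ℝ) * (1/(n:ℝ) - M) ≤ (T.card:ℝ)/N := by
      calc (S1.card:ℝ) * (1/(n:ℝ) - M) = ∑ _a ∈ S1, (1/(n:ℝ) - M) := by
            rw [Finset.sum_const, nsmul_eq_mul]
        _ ≤ ∑ a ∈ S1, ((bin a).card : ℝ)/N := Finset.sum_le_sum (fun a ha => by
            rw [hS1def, mem_filter, mem_range] at ha
            exact (hbinM a ha.1).1)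
        _ = (∑ a ∈ S1, ((bin a).card : ℝ))/N := (Finset.sum_div _ _ _).symm
        _ ≤ (T.card:ℝ)/N := (div_le_div_iff_of_pos_right hNpos).mpr hcardT1
    have e2 : ((v-u)*n - 2) * (1/(n:ℝ)) ≤ (S1.card:ℝ) * (1/(n:ℝ)) :=
      mul_le_mul_of_nonneg_right hcardS1.le (by positivity)
    have e3 : ((v-u)*n - 2) * (1/(n:ℝ)) = (v-u) - 2/(n:ℝ) := by field_simp
    have e4 : (S1.card:ℝ) * M ≤ (n:ℝ) * M := mul_le_mul_of_nonneg_right hS1n hM0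
    nlinarith
  exact abs_le.mpr ⟨by linarith, by linarith⟩

open Classical in
theorem stmt0 (ε : ℝ) (hε0 : 0 < ε) (hε1 : ε < 1) (N : ℕ) (hN : 0 < N)
    (ξ : Fin N → ℝ) (hξ : ∀ n, ξ n ∈ Set.Icc (0 : ℝ) 1)
    (h : ∀ a : ℕ, a < ⌈3 / ε⌉₊ →
      |((Finset.univ.filter fun n : Fin N =>
            (a : ℝ) / (⌈3 / ε⌉₊ : ℝ) ≤ ξ n ∧ ξ n < ((a : ℝ) + 1) / (⌈3 / ε⌉₊ : ℝ)).card : ℝ) / N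
          - 1 / (⌈3 / ε⌉₊ : ℝ)| < (ε / 3) ^ 2) :
    seqDisc ξ < ε := by
  set n := ⌈3 / ε⌉₊ with hndef
  have h3ε : (0:ℝ) < 3/ε := by positivity
  have hn : 0 < n := Nat.ceil_pos.mpr h3ε
  have hnge : 3/ε ≤ (n:ℝ) := Nat.le_ceil _
  have hnlt : (n:ℝ) < 3/ε + 1 := Nat.ceil_lt_add_one h3ε.le
  have hnpos : (0:ℝ) < n := by exact_mod_cast hn
  have hrange : (range n).Nonempty := nonempty_range_iff.mpr hn.ne'
  set M := (range n).sup' hrange (fun a =>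
    |((Finset.univ.filter fun i : Fin N =>
          (a : ℝ) / (n : ℝ) ≤ ξ i ∧ ξ i < ((a : ℝ) + 1) / (n : ℝ)).card : ℝ) / N
        - 1 / (n : ℝ)|) with hMdef
  have hMlt : M < (ε/3)^2 := by
    rw [hMdef]
    exact (Finset.sup'_lt_iff hrange).mpr (fun a ha => h a (mem_range.mp ha))
  have hMub : ∀ a : ℕ, a < n →
      |((Finset.univ.filter fun i : Fin N =>
            (a : ℝ) / (n : ℝ) ≤ ξ i ∧ ξ i < ((a : ℝ) + 1) / (n : ℝ)).card : ℝ) / N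
          - 1 / (n : ℝ)| ≤ M := by
    intro a ha
    rw [hMdef]
    apply Finset.le_sup' (fun a : ℕ =>
      |((Finset.univ.filter fun i : Fin N =>
            (a : ℝ) / (n : ℝ) ≤ ξ i ∧ ξ i < ((a : ℝ) + 1) / (n : ℝ)).card : ℝ) / N
          - 1 / (n : ℝ)|) (mem_range.mpr ha)
  have hkey : seqDisc ξ ≤ 2/(n:ℝ) + (n:ℝ)*M := by
    rw [seqDisc]
    apply csSup_le
    · exact ⟨_, 0, 1, le_refl 0, one_pos, le_refl 1, rfl⟩
    · rintro d ⟨u, v, hu, huv, hv, rfl⟩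
      exact key_count hN hn ξ hξ M hMub u v hu huv hv
  have h1 : 3 ≤ (n:ℝ)*ε := by
    rw [div_le_iff₀ hε0] at hnge; linarith
  have h2 : (n:ℝ)*ε ≤ 6 := by
    have := mul_lt_mul_of_pos_right hnlt hε0
    rw [add_mul, div_mul_cancel₀] at this
    · nlinarith
    · exact hε0.ne'
  have h18 : 18 + ((n:ℝ)*ε)^2 ≤ 9*((n:ℝ)*ε) := by nlinarith [mul_nonneg (sub_nonneg.mpr h1) (sub_nonneg.mpr h2)]
  have harith : 2/(n:ℝ) + (n:ℝ)*(ε/3)^2 ≤ ε := by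
    have hd : (2:ℝ) ≤ (ε - (n:ℝ)*(ε/3)^2) * n := by nlinarith [h18]
    have := (div_le_iff₀ hnpos).mpr hd
    linarith
  have hstep : 2/(n:ℝ) + (n:ℝ)*M < 2/(n:ℝ) + (n:ℝ)*(ε/3)^2 := by
    have := mul_lt_mul_of_pos_left hMlt hnpos
    linarith
  linarith
end

section
/- Let (ξ_j)_{j≥1} be a sequence of real numbers in [0,1], let ε be a positive real number, and let (b_m)_{m≥0} be a strictly increasing sequence of positive integers. Suppose that there is an m₀ such that for all m > m₀, b_{m+1} − b_m ≤ ε·b_m and D(ξ_j : b_m < j ≤ b_{m+1}) < ε. Then limsup_{N→∞} D(ξ₁,…,ξ_N) ≤ 2ε. -/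
open Finset Filter

open Classical in
/-- counting function for indices in `(a, c]` -/
noncomputable def cntD (ξ : ℕ → ℝ) (u v : ℝ) (a c : ℕ) : ℕ :=
  ((Finset.Ioc a c).filter fun n => u ≤ ξ n ∧ ξ n < v).card

open Classical in
lemma cntD_le (ξ : ℕ → ℝ) (u v : ℝ) (a c : ℕ) : cntD ξ u v a c ≤ c - a := by
  unfold cntD
  exact (Finset.card_filter_le _ _).trans (by rw [Nat.card_Ioc])

open Classical in
lemma cntD_add (ξ : ℕ → ℝ) (u v : ℝ) {a c e : ℕ} (h1 : a ≤ c) (h2 : c ≤ e) :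
    cntD ξ u v a c + cntD ξ u v c e = cntD ξ u v a e := by
  unfold cntD
  rw [← Finset.card_union_of_disjoint, ← Finset.filter_union,
    Finset.Ioc_union_Ioc_eq_Ioc h1 h2]
  apply Finset.disjoint_filter_filter
  rw [Finset.disjoint_left]
  intro n hn hn'
  rw [Finset.mem_Ioc] at hn hn'
  omega

open Classical in
lemma fin_card (ξ : ℕ → ℝ) (u v : ℝ) (a M : ℕ) :
    (Finset.univ.filter fun i : Fin M => u ≤ ξ (a + 1 + (i : ℕ)) ∧ ξ (a + 1 + (i : ℕ)) < v).card
      = cntD ξ u v a (a + M) := by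
  unfold cntD
  refine Finset.card_bij (fun i _ => a + 1 + (i : ℕ)) ?_ ?_ ?_
  · rintro i hi
    simp only [Finset.mem_filter, Finset.mem_univ, true_and] at hi
    simp only [Finset.mem_filter, Finset.mem_Ioc]
    exact ⟨⟨by omega, by omega⟩, hi⟩
  · intro i _ j _ hij
    exact Fin.ext (by omega)
  · rintro n hn
    simp only [Finset.mem_filter, Finset.mem_Ioc] at hn
    refine ⟨⟨n - a - 1, by omega⟩, ?_, by simp; omega⟩
    simp only [Finset.mem_filter, Finset.mem_univ, true_and]
    have : a + 1 + (n - a - 1) = n := by omega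
    rw [this]
    exact hn.2

open Classical in
lemma seqDisc_elem_lt {N : ℕ} (ξ : Fin N → ℝ) {ε u v : ℝ}
    (h0 : 0 ≤ u) (huv : u < v) (hv1 : v ≤ 1) (hd : seqDisc ξ < ε) :
    |((Finset.univ.filter fun n : Fin N => u ≤ ξ n ∧ ξ n < v).card : ℝ) / N - (v - u)| < ε := by
  refine lt_of_le_of_lt ?_ hd
  apply le_csSup
  · refine ⟨1, ?_⟩
    rintro d ⟨u', v', h0', huv', hv1', rfl⟩
    have hcard : ((Finset.univ.filter fun n : Fin N => u' ≤ ξ n ∧ ξ n < v').card : ℝ) / N ≤ 1 := by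
      rcases Nat.eq_zero_or_pos N with hN | hN
      · subst hN; simp
      · rw [div_le_one (by positivity)]
        exact_mod_cast (Finset.card_filter_le _ _).trans (by simp)
    have hcard0 : (0:ℝ) ≤ ((Finset.univ.filter fun n : Fin N => u' ≤ ξ n ∧ ξ n < v').card : ℝ) / N := by
      positivity
    rw [abs_sub_le_iff]
    constructor <;> nlinarith
  · exact ⟨u, v, h0, huv, hv1, rfl⟩

open Classical in
lemma seqDisc_le {N : ℕ} (ξ : Fin N → ℝ) {C : ℝ} (hC : 0 ≤ C)
    (h : ∀ u v : ℝ, 0 ≤ u → u < v → v ≤ 1 →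
      |((Finset.univ.filter fun n : Fin N => u ≤ ξ n ∧ ξ n < v).card : ℝ) / N - (v - u)| ≤ C) :
    seqDisc ξ ≤ C := by
  apply Real.sSup_le _ hC
  rintro d ⟨u, v, h0, huv, hv1, rfl⟩
  exact h u v h0 huv hv1

lemma seqDisc_nonneg {N : ℕ} (ξ : Fin N → ℝ) : 0 ≤ seqDisc ξ := by
  apply Real.sSup_nonneg
  rintro d ⟨u, v, h0, huv, hv1, rfl⟩
  exact abs_nonneg _

lemma cntD_crude (ξ : ℕ → ℝ) {u v : ℝ} (h0 : 0 ≤ u) (huv : u < v) (hv1 : v ≤ 1)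
    {a c : ℕ} (hac : a ≤ c) :
    |(cntD ξ u v a c : ℝ) - (v - u) * ((c : ℝ) - a)| ≤ (c : ℝ) - a := by
  have h1 : (cntD ξ u v a c : ℝ) ≤ (c : ℝ) - a := by
    have := cntD_le ξ u v a c
    have h2 : ((c - a : ℕ) : ℝ) = (c : ℝ) - a := by
      rw [Nat.cast_sub hac]
    calc (cntD ξ u v a c : ℝ) ≤ ((c - a : ℕ) : ℝ) := by exact_mod_cast this
    _ = (c : ℝ) - a := h2
  have hca : (0:ℝ) ≤ (c : ℝ) - a := by
    have : (a:ℝ) ≤ c := by exact_mod_cast hac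
    linarith
  have h3 : 0 ≤ (v - u) * ((c : ℝ) - a) := by nlinarith
  have h4 : (v - u) * ((c : ℝ) - a) ≤ (c : ℝ) - a := by nlinarith
  have h5 : (0:ℝ) ≤ (cntD ξ u v a c : ℝ) := Nat.cast_nonneg _
  rw [abs_sub_le_iff]
  constructor <;> linarith

lemma cntD_sum (ξ : ℕ → ℝ) (u v : ℝ) (b : ℕ → ℕ) (hb : StrictMono b) {p q : ℕ} (hpq : p ≤ q) :
    cntD ξ u v (b p) (b q) = ∑ k ∈ Finset.Ico p q, cntD ξ u v (b k) (b (k + 1)) := by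
  induction q, hpq using Nat.le_induction with
  | base => simp [cntD]
  | succ q hpq ih =>
    rw [Finset.sum_Ico_succ_top hpq, ← ih,
      cntD_add ξ u v (hb.monotone hpq) (hb (Nat.lt_succ_self q)).le]

lemma tele_sum (b : ℕ → ℕ) {p q : ℕ} (hpq : p ≤ q) :
    ∑ k ∈ Finset.Ico p q, ((b (k + 1) : ℝ) - b k) = (b q : ℝ) - b p := by
  induction q, hpq using Nat.le_induction with
  | base => simp
  | succ q hpq ih => rw [Finset.sum_Ico_succ_top hpq, ih]; ring

/- The sequence `(ξ_j)_{j ≥ 1}` is given by `ξ : ℕ → ℝ`, where `ξ j` is the `j`-th term for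
`j ≥ 1`.  `D(ξ_j : a < j ≤ b)` is `seqDisc (fun i : Fin (b - a) => ξ (a + 1 + i))`, and
`D(ξ₁, …, ξ_N)` is `seqDisc (fun i : Fin N => ξ (1 + i))`. -/
theorem stmt3 (ξ : ℕ → ℝ) (hξ : ∀ j, ξ j ∈ Set.Icc (0 : ℝ) 1)
    (ε : ℝ) (hε : 0 < ε) (b : ℕ → ℕ) (hb : StrictMono b) (hbpos : ∀ m, 0 < b m)
    (h : ∃ m₀ : ℕ, ∀ m > m₀,
      ((b (m + 1) : ℝ) - b m ≤ ε * b m) ∧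
      seqDisc (fun i : Fin (b (m + 1) - b m) => ξ (b m + 1 + (i : ℕ))) < ε) :
    Filter.limsup (fun N : ℕ => seqDisc (fun i : Fin N => ξ (1 + (i : ℕ)))) Filter.atTop
      ≤ 2 * ε := by
  classical
  obtain ⟨m₀, hm⟩ := h
  set B₀ : ℝ := (b (m₀ + 1) : ℝ) with hB₀
  -- key pointwise bound
  have key : ∀ N : ℕ, b (m₀ + 1) ≤ N →
      seqDisc (fun i : Fin N => ξ (1 + (i : ℕ))) ≤ 2 * ε + B₀ / N := by
    intro N hN
    have hN0 : 0 < N := (hbpos _).trans_le hN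
    have hNR : (0:ℝ) < N := by exact_mod_cast hN0
    apply seqDisc_le
    · have : 0 ≤ B₀ / N := by positivity
      linarith
    intro u v h0 huv hv1
    -- find the greatest M ≤ N with b M ≤ N
    set M := Nat.findGreatest (fun m => b m ≤ N) N with hM
    have hm₀N : m₀ + 1 ≤ N := hb.le_apply.trans hN
    have hM1 : m₀ + 1 ≤ M := Nat.le_findGreatest hm₀N hN
    have hMle : b M ≤ N := Nat.findGreatest_spec (P := fun m => b m ≤ N) hm₀N hN
    have hMlt : N < b (M + 1) := by
      by_contra hc
      push_neg at hc
      have h1 : M + 1 ≤ N := hb.le_apply.trans hc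
      exact Nat.findGreatest_is_greatest (Nat.lt_succ_self M) h1 hc
    have hbM : b (m₀ + 1) ≤ b M := hb.monotone hM1
    -- count identities
    have hcard : (Finset.univ.filter fun i : Fin N => u ≤ ξ (1 + (i : ℕ)) ∧ ξ (1 + (i : ℕ)) < v).card
        = cntD ξ u v 0 N := by
      have := fin_card ξ u v 0 N
      simpa using this
    rw [hcard]
    have split1 : (cntD ξ u v 0 N : ℝ)
        = cntD ξ u v 0 (b (m₀ + 1)) + cntD ξ u v (b (m₀ + 1)) (b M) + cntD ξ u v (b M) N := by
      have e1 : cntD ξ u v 0 (b (m₀ + 1)) + cntD ξ u v (b (m₀ + 1)) (b M) = cntD ξ u v 0 (b M) :=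
        cntD_add ξ u v (Nat.zero_le _) hbM
      have e2 : cntD ξ u v 0 (b M) + cntD ξ u v (b M) N = cntD ξ u v 0 N :=
        cntD_add ξ u v (Nat.zero_le _) hMle
      push_cast [← e2, ← e1]
      ring
    -- block estimates
    have hblock : ∀ k ∈ Finset.Ico (m₀ + 1) M,
        |(cntD ξ u v (b k) (b (k + 1)) : ℝ) - (v - u) * ((b (k + 1) : ℝ) - b k)|
          ≤ ε * ((b (k + 1) : ℝ) - b k) := by
      intro k hk
      rw [Finset.mem_Ico] at hk
      have hkm : m₀ < k := hk.1
      have hbk : b k < b (k + 1) := hb (Nat.lt_succ_self k)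
      have hdisc := (hm k hkm).2
      have hL : (0:ℝ) < (b (k + 1) : ℝ) - b k := by
        have : (b k : ℝ) < b (k + 1) := by exact_mod_cast hbk
        linarith
      have hcast : ((b (k + 1) - b k : ℕ) : ℝ) = (b (k + 1) : ℝ) - b k := by
        rw [Nat.cast_sub hbk.le]
      have hcardk := fin_card ξ u v (b k) (b (k + 1) - b k)
      rw [Nat.add_sub_cancel' hbk.le] at hcardk
      have helem := seqDisc_elem_lt _ h0 huv hv1 hdisc
      rw [hcardk, hcast] at helem
      have heq : (cntD ξ u v (b k) (b (k + 1)) : ℝ) - (v - u) * ((b (k + 1) : ℝ) - b k)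
          = ((cntD ξ u v (b k) (b (k + 1)) : ℝ) / ((b (k + 1) : ℝ) - b k) - (v - u))
            * ((b (k + 1) : ℝ) - b k) := by
        field_simp
      rw [heq, abs_mul, abs_of_pos hL]
      exact mul_le_mul_of_nonneg_right helem.le hL.le
    -- sum of blocks
    have hsum : cntD ξ u v (b (m₀ + 1)) (b M)
        = ∑ k ∈ Finset.Ico (m₀ + 1) M, cntD ξ u v (b k) (b (k + 1)) :=
      cntD_sum ξ u v b hb hM1
    have hsumR : |(cntD ξ u v (b (m₀ + 1)) (b M) : ℝ) - (v - u) * ((b M : ℝ) - B₀)|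
        ≤ ε * ((b M : ℝ) - B₀) := by
      have e1 : (cntD ξ u v (b (m₀ + 1)) (b M) : ℝ)
          = ∑ k ∈ Finset.Ico (m₀ + 1) M, (cntD ξ u v (b k) (b (k + 1)) : ℝ) := by
        rw [hsum]; push_cast; ring
      have e2 : (v - u) * ((b M : ℝ) - B₀)
          = ∑ k ∈ Finset.Ico (m₀ + 1) M, (v - u) * ((b (k + 1) : ℝ) - b k) := by
        rw [← Finset.mul_sum, tele_sum b hM1]
      have e3 : ε * ((b M : ℝ) - B₀)
          = ∑ k ∈ Finset.Ico (m₀ + 1) M, ε * ((b (k + 1) : ℝ) - b k) := by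
        rw [← Finset.mul_sum, tele_sum b hM1]
      rw [e1, e2, e3, ← Finset.sum_sub_distrib]
      exact (Finset.abs_sum_le_sum_abs _ _).trans (Finset.sum_le_sum hblock)
    -- initial segment
    have hinit : |(cntD ξ u v 0 (b (m₀ + 1)) : ℝ) - (v - u) * B₀| ≤ B₀ := by
      have := cntD_crude ξ h0 huv hv1 (Nat.zero_le (b (m₀ + 1)))
      simpa using this
    -- tail
    have htail : |(cntD ξ u v (b M) N : ℝ) - (v - u) * ((N : ℝ) - b M)| ≤ ε * N := by
      have h1 := cntD_crude ξ h0 huv hv1 hMle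
      have h2 : (N : ℝ) - b M ≤ (b (M + 1) : ℝ) - b M := by
        have : (N : ℝ) ≤ b (M + 1) := by exact_mod_cast hMlt.le
        linarith
      have h3 := (hm M (lt_of_lt_of_le (Nat.lt_succ_self m₀) hM1)).1
      have h4 : (b M : ℝ) ≤ N := by exact_mod_cast hMle
      have h5 : (0:ℝ) ≤ b M := Nat.cast_nonneg _
      calc |(cntD ξ u v (b M) N : ℝ) - (v - u) * ((N : ℝ) - b M)| ≤ (N : ℝ) - b M := h1
      _ ≤ ε * N := by nlinarith
    -- assemble
    have hBle : B₀ ≤ (b M : ℝ) := by rw [hB₀]; exact_mod_cast hbM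
    have hbMN : (b M : ℝ) ≤ N := by exact_mod_cast hMle
    have hB0 : (0:ℝ) ≤ B₀ := Nat.cast_nonneg _
    have hmid : ε * ((b M : ℝ) - B₀) ≤ ε * N := by nlinarith
    have htotal : |(cntD ξ u v 0 N : ℝ) - (v - u) * N| ≤ 2 * ε * N + B₀ := by
      have expand : (cntD ξ u v 0 N : ℝ) - (v - u) * N
          = ((cntD ξ u v 0 (b (m₀ + 1)) : ℝ) - (v - u) * B₀)
            + ((cntD ξ u v (b (m₀ + 1)) (b M) : ℝ) - (v - u) * ((b M : ℝ) - B₀))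
            + ((cntD ξ u v (b M) N : ℝ) - (v - u) * ((N : ℝ) - b M)) := by
        rw [split1]; ring
      rw [expand]
      calc |_ + _ + _| ≤ _ := (abs_add_le _ _).trans (add_le_add (abs_add_le _ _) le_rfl)
      _ ≤ B₀ + ε * ((b M : ℝ) - B₀) + ε * N := add_le_add (add_le_add hinit hsumR) htail
      _ ≤ 2 * ε * N + B₀ := by nlinarith
    have heqN : (cntD ξ u v 0 N : ℝ) / N - (v - u) = ((cntD ξ u v 0 N : ℝ) - (v - u) * N) / N := by
      field_simp
    rw [heqN, abs_div, abs_of_pos hNR, div_le_iff₀ hNR]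

    calc |(cntD ξ u v 0 N : ℝ) - (v - u) * N| ≤ 2 * ε * N + B₀ := htotal
    _ ≤ (2 * ε + B₀ / N) * N := by
      rw [add_mul, div_mul_cancel₀ _ (ne_of_gt hNR)]
  -- limsup step
  have hg : Tendsto (fun N : ℕ => 2 * ε + B₀ / N) atTop (nhds (2 * ε)) := by
    have := (tendsto_const_nhds (x := 2 * ε) (f := atTop (α := ℕ))).add
      (tendsto_const_div_atTop_nhds_zero_nat B₀)
    simpa using this
  have hev : (fun N : ℕ => seqDisc (fun i : Fin N => ξ (1 + (i : ℕ))))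
      ≤ᶠ[atTop] fun N : ℕ => 2 * ε + B₀ / N :=
    eventually_atTop.2 ⟨b (m₀ + 1), key⟩
  calc Filter.limsup (fun N : ℕ => seqDisc (fun i : Fin N => ξ (1 + (i : ℕ)))) Filter.atTop
      ≤ Filter.limsup (fun N : ℕ => 2 * ε + B₀ / N) Filter.atTop := by
        exact Filter.limsup_le_limsup hev
          (isCoboundedUnder_le_of_le atTop fun N => seqDisc_nonneg _)
          hg.isBoundedUnder_le
  _ = 2 * ε := hg.limsup_eq
end

section
/- Let s and r be bases, let a be a positive integer, and let ε be a real number with 0 < ε < 1. There exist a finite family F of subintervals of [0,1] and a positive integer ℓ₀ such that for all ℓ ≥ ℓ₀ and all real numbers ξ₀ and ξ with ξ ∈ [ξ₀, ξ₀ + s^{−⟨a+ℓ;s⟩}): if D(F, ({r^j ξ₀} : ⟨a;r⟩ < j ≤ ⟨a+ℓ;r⟩)) < (ε/10)⁴, then D({r^j ξ} : ⟨a;r⟩ < j ≤ ⟨a+ℓ;r⟩) < ε. -/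
open Finset Real

/-- `⟨b;r⟩ = ⌈b / log r⌉` where `log` is the natural logarithm. -/
noncomputable def bRad (b r : ℕ) : ℕ := ⌈(b : ℝ) / Real.log r⌉₊

/- `famDisc F ξ` is the discrepancy of `ξ` for the finite family `F` of semi-open
intervals, where `p ∈ F` represents the interval `[p.1, p.2)`. -/
open Classical in
noncomputable def famDisc {N : ℕ} (F : Finset (ℝ × ℝ)) (ξ : Fin N → ℝ) : ℝ :=
  sSup { d : ℝ | ∃ p ∈ F,
    d = |((Finset.univ.filter fun n : Fin N => p.1 ≤ ξ n ∧ ξ n < p.2).card : ℝ) / N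
          - (p.2 - p.1)| }





lemma card_tail (N T : ℕ) :
    ((Finset.univ : Finset (Fin N)).filter fun i : Fin N => N - T ≤ (i : ℕ)).card ≤ T := by
  classical
  have h := Finset.card_le_card_of_injOn
    (s := (Finset.univ : Finset (Fin N)).filter fun i : Fin N => N - T ≤ (i : ℕ))
    (t := Finset.range T) (fun i : Fin N => (i : ℕ) - (N - T)) ?_ ?_
  · simpa using h
  · intro i hi
    have h1 : N - T ≤ (i : ℕ) := (Finset.mem_filter.1 hi).2
    have := i.isLt
    simp only [Finset.mem_range]
    simp only [Finset.mem_coe, Finset.mem_range]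
    omega
  · intro i hi j hj h
    simp only [Finset.coe_filter, Set.mem_setOf_eq] at hi hj
    have := i.isLt; have := j.isLt
    have h' : (i : ℕ) - (N - T) = (j : ℕ) - (N - T) := h
    exact Fin.ext (by omega)

lemma fract_shift (x θ : ℝ) (hx0 : 0 ≤ x) (hx1 : x < 1) (hθ0 : 0 ≤ θ) (hθ1 : θ ≤ 1) :
    (x + θ < 1 ∧ Int.fract (x + θ) = x + θ) ∨
    (1 ≤ x + θ ∧ Int.fract (x + θ) = x + θ - 1) := by
  rcases lt_or_ge (x + θ) 1 with h | h
  · exact Or.inl ⟨h, Int.fract_eq_self.2 ⟨by linarith, h⟩⟩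
  · refine Or.inr ⟨h, ?_⟩
    have h2 : Int.fract (x + θ) = Int.fract (x + θ - (1 : ℤ)) := (Int.fract_sub_intCast _ _).symm
    rw [h2]
    push_cast
    rw [Int.fract_eq_self.2 ⟨by linarith, by linarith⟩]

set_option maxHeartbeats 2000000 in
lemma key (N T m : ℕ) (hm : 1 ≤ m) (hN : 0 < N) (η : ℝ) (hη : 0 ≤ η)
    (x y : Fin N → ℝ) (hx0 : ∀ i, 0 ≤ x i) (hx1 : ∀ i, x i < 1)
    (hrel : ∀ i : Fin N, (i : ℕ) < N - T →
      ∃ θ : ℝ, 0 ≤ θ ∧ θ ≤ 1 / m ∧ y i = Int.fract (x i + θ))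
    (Hg : ∀ p q : ℕ, p < q → q ≤ m →
      |((Finset.univ.filter fun i : Fin N => (p : ℝ)/m ≤ x i ∧ x i < (q : ℝ)/m).card : ℝ)/N
        - ((q : ℝ)/m - (p : ℝ)/m)| ≤ η)
    (u v : ℝ) (hu : 0 ≤ u) (huv : u < v) (hv : v ≤ 1) :
    |((Finset.univ.filter fun i : Fin N => u ≤ y i ∧ y i < v).card : ℝ)/N - (v - u)|
      ≤ 2*η + 4/m + (T : ℝ)/N := by
  classical
  have hmR : (1:ℝ) ≤ (m:ℝ) := by exact_mod_cast hm
  have hmR0 : (0:ℝ) < (m:ℝ) := by linarith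
  have hNR : (0:ℝ) < (N:ℝ) := by exact_mod_cast hN
  have hβ1 : (1:ℝ)/m ≤ 1 := by rw [div_le_one hmR0]; exact hmR
  have hβ0 : (0:ℝ) < 1/m := by positivity
  have hTN : (0:ℝ) ≤ (T:ℝ)/N := by positivity
  set C : ℕ := ((Finset.univ : Finset (Fin N)).filter fun i : Fin N => u ≤ y i ∧ y i < v).card
    with hC
  have hCN : (C : ℝ)/N ≤ 1 := by
    rw [div_le_one hNR]
    exact_mod_cast (Finset.card_filter_le _ _).trans_eq (by simp)
  have hCN0 : (0:ℝ) ≤ (C : ℝ)/N := by positivity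
  rw [abs_sub_le_iff]
  constructor
  · -- upper bound
    set a' : ℕ := ⌊u * m⌋₊ - 1 with ha'
    set b' : ℕ := ⌈v * m⌉₊ with hb'
    have hum0 : 0 ≤ u * m := by positivity
    have hb'ge : v * m ≤ (b' : ℝ) := Nat.le_ceil _
    have hv0 : (0:ℝ) ≤ v := le_of_lt (lt_of_le_of_lt hu huv)
    have hb'le : (b' : ℝ) ≤ v * m + 1 := le_of_lt (Nat.ceil_lt_add_one (by positivity))
    have hb'm : b' ≤ m := Nat.ceil_le.2 (by nlinarith)
    have ha'x : ∀ i : Fin N, u - 1/m ≤ x i → (a' : ℝ)/m ≤ x i := by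
      intro i hxi
      rcases Nat.eq_zero_or_pos ⌊u * m⌋₊ with h0 | h0
      · have : a' = 0 := by omega
        rw [this]
        simpa using hx0 i
      · have hcast : (a' : ℝ) = (⌊u * m⌋₊ : ℝ) - 1 := by
          rw [ha', Nat.cast_sub h0]; norm_num
        have hfl : (⌊u * m⌋₊ : ℝ) ≤ u * m := Nat.floor_le hum0
        have h : (a' : ℝ) ≤ u * m - 1 := by rw [hcast]; linarith
        rw [div_le_iff₀ hmR0]
        have h1m : (1/(m:ℝ)) * m = 1 := by field_simp
        nlinarith [hxi]
    have ha'b' : a' < b' := by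
      rcases Nat.eq_zero_or_pos a' with h0 | h0
      · have hb : (0:ℝ) < (b':ℝ) := lt_of_lt_of_le (by nlinarith) hb'ge
        have : 0 < b' := by exact_mod_cast hb
        omega
      · have hcast : (a' : ℝ) = (⌊u * m⌋₊ : ℝ) - 1 := by
          rw [ha', Nat.cast_sub (by omega)]; norm_num
        have hfl : (⌊u * m⌋₊ : ℝ) ≤ u * m := Nat.floor_le hum0
        have : (a' : ℝ) < (b' : ℝ) := by nlinarith
        exact_mod_cast this
    have hb'v : v ≤ (b':ℝ)/m := by rw [le_div_iff₀ hmR0]; exact hb'ge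
    have hsub : ((Finset.univ : Finset (Fin N)).filter fun i : Fin N => u ≤ y i ∧ y i < v) ⊆
        ((((Finset.univ : Finset (Fin N)).filter fun i : Fin N => N - T ≤ (i:ℕ)) ∪
         ((Finset.univ : Finset (Fin N)).filter fun i : Fin N =>
            (a':ℝ)/m ≤ x i ∧ x i < (b':ℝ)/m)) ∪
         ((Finset.univ : Finset (Fin N)).filter fun i : Fin N =>
            ((m-1:ℕ):ℝ)/m ≤ x i ∧ x i < ((m:ℕ):ℝ)/m)) := by
      intro i hi
      simp only [Finset.mem_filter, Finset.mem_union, Finset.mem_univ, true_and] at hi ⊢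
      by_cases hgood : (i:ℕ) < N - T
      · obtain ⟨θ, hθ0, hθ1, hyi⟩ := hrel i hgood
        rcases fract_shift (x i) θ (hx0 i) (hx1 i) hθ0 (le_trans hθ1 hβ1) with ⟨h1, h2⟩ | ⟨h1, h2⟩
        · left; right
          rw [hyi, h2] at hi
          refine ⟨ha'x i (by linarith [hi.1]), lt_of_lt_of_le ?_ hb'v⟩
          linarith [hi.2]
        · right
          rw [hyi, h2] at hi
          constructor
          · have hc : ((m - 1 : ℕ) : ℝ)/m = 1 - 1/m := by
              rw [Nat.cast_sub hm]; field_simp; norm_num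
            rw [hc]; linarith
          · have hc : ((m:ℕ):ℝ)/m = 1 := div_self (ne_of_gt hmR0)
            rw [hc]; exact hx1 i
      · left; left; omega
    set C2 : ℕ := ((Finset.univ : Finset (Fin N)).filter fun i : Fin N =>
        (a':ℝ)/m ≤ x i ∧ x i < (b':ℝ)/m).card with hC2
    set C3 : ℕ := ((Finset.univ : Finset (Fin N)).filter fun i : Fin N =>
        ((m-1:ℕ):ℝ)/m ≤ x i ∧ x i < ((m:ℕ):ℝ)/m).card with hC3
    have h1 : C ≤ T + C2 + C3 := by
      have hc1 := Finset.card_le_card hsub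
      have hc2 := Finset.card_union_le
        ((((Finset.univ : Finset (Fin N)).filter fun i : Fin N => N - T ≤ (i:ℕ)) ∪
         ((Finset.univ : Finset (Fin N)).filter fun i : Fin N =>
            (a':ℝ)/m ≤ x i ∧ x i < (b':ℝ)/m)))
        ((Finset.univ : Finset (Fin N)).filter fun i : Fin N =>
            ((m-1:ℕ):ℝ)/m ≤ x i ∧ x i < ((m:ℕ):ℝ)/m)
      have hc3 := Finset.card_union_le
        ((Finset.univ : Finset (Fin N)).filter fun i : Fin N => N - T ≤ (i:ℕ))
        ((Finset.univ : Finset (Fin N)).filter fun i : Fin N =>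
            (a':ℝ)/m ≤ x i ∧ x i < (b':ℝ)/m)
      have hc4 := card_tail N T
      omega
    have hg2 := Hg a' b' ha'b' hb'm
    have hg3 := Hg (m-1) m (by omega) le_rfl
    rw [abs_sub_le_iff] at hg2 hg3
    have ha'ge : u*m - 2 ≤ (a':ℝ) := by
      rcases Nat.eq_zero_or_pos ⌊u * m⌋₊ with h0 | h0
      · have hz : a' = 0 := by omega
        have h1 : u * m < 1 := by
          have := Nat.lt_floor_add_one (u*m)
          rw [h0] at this; push_cast at this; linarith
        rw [hz]; push_cast; linarith
      · have hcast : (a' : ℝ) = (⌊u * m⌋₊ : ℝ) - 1 := by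
          rw [ha', Nat.cast_sub h0]; norm_num
        have h2 := Nat.lt_floor_add_one (u*m)
        linarith
    have hlen : (b':ℝ)/m - (a':ℝ)/m ≤ (v - u) + 3/m := by
      have h : (b':ℝ) - a' ≤ (v-u)*m + 3 := by linarith
      calc (b':ℝ)/m - (a':ℝ)/m = ((b':ℝ) - a')/m := (sub_div _ _ _).symm
        _ ≤ ((v-u)*m + 3)/m := by gcongr
        _ = (v-u) + 3/m := by field_simp
    have hlen3 : ((m:ℕ):ℝ)/m - ((m-1:ℕ):ℝ)/m = 1/m := by
      rw [Nat.cast_sub hm]; field_simp; norm_num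
    have h2 : (C2:ℝ)/N ≤ ((v - u) + 3/m) + η := by linarith [hg2.1]
    have h3 : (C3:ℝ)/N ≤ 1/m + η := by linarith [hg3.1]
    have h1R : (C:ℝ)/N ≤ (T:ℝ)/N + (C2:ℝ)/N + (C3:ℝ)/N := by
      have hcast : (C:ℝ) ≤ (T:ℝ) + C2 + C3 := by exact_mod_cast h1
      calc (C:ℝ)/N ≤ ((T:ℝ) + C2 + C3)/N := by gcongr
        _ = (T:ℝ)/N + (C2:ℝ)/N + (C3:ℝ)/N := by ring
    have h4m : 3/(m:ℝ) + 1/m = 4/m := by ring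
    linarith
  · -- lower bound
    by_cases hsmall : v - u ≤ 3/m
    · have h4m : 3/(m:ℝ) + 1/m = 4/m := by ring
      linarith
    · push_neg at hsmall
      have hv0 : (0:ℝ) ≤ v := le_of_lt (lt_of_le_of_lt hu huv)
      have hvm3 : 3 < (v - u) * m := by
        have : (3/(m:ℝ)) * m = 3 := by field_simp
        nlinarith
      set a'' : ℕ := ⌈u * m⌉₊ with ha''
      set b'' : ℕ := ⌊v * m⌋₊ - 1 with hb''
      have hum0 : 0 ≤ u * (m:ℝ) := by positivity
      have hvm0 : 0 ≤ v * (m:ℝ) := by positivity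
      have ha''ge : u * m ≤ (a'':ℝ) := Nat.le_ceil _
      have ha''le : (a'':ℝ) ≤ u * m + 1 := le_of_lt (Nat.ceil_lt_add_one hum0)
      have hfl1 : (1:ℕ) ≤ ⌊v * m⌋₊ := by
        apply Nat.le_floor
        push_cast
        nlinarith
      have hb''cast : (b'':ℝ) = (⌊v * m⌋₊:ℝ) - 1 := by
        rw [hb'', Nat.cast_sub hfl1]; norm_num
      have hb''le : (b'':ℝ) ≤ v * m - 1 := by
        have := Nat.floor_le hvm0
        linarith
      have hb''ge : v * m - 2 ≤ (b'':ℝ) := by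
        have := Nat.lt_floor_add_one (v * m)
        linarith
      have hab : a'' < b'' := by
        have h : (a'':ℝ) < (b'':ℝ) := by nlinarith
        exact_mod_cast h
      have hb''m : b'' ≤ m := by
        have h : ⌊v * m⌋₊ ≤ m := by
          have h2 : ⌊v * m⌋₊ ≤ ⌊(m:ℝ)⌋₊ := Nat.floor_le_floor (by nlinarith)
          simpa using h2
        omega
      have hua : u ≤ (a'':ℝ)/m := by rw [le_div_iff₀ hmR0]; exact ha''ge
      have hbv : (b'':ℝ)/m ≤ v - 1/m := by
        rw [div_le_iff₀ hmR0]
        have h1m : (1/(m:ℝ)) * m = 1 := by field_simp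
        nlinarith
      have hsub2 : ((Finset.univ : Finset (Fin N)).filter fun i : Fin N =>
            (a'':ℝ)/m ≤ x i ∧ x i < (b'':ℝ)/m) ⊆
          (((Finset.univ : Finset (Fin N)).filter fun i : Fin N => u ≤ y i ∧ y i < v) ∪
           ((Finset.univ : Finset (Fin N)).filter fun i : Fin N => N - T ≤ (i:ℕ))) := by
        intro i hi
        simp only [Finset.mem_filter, Finset.mem_union, Finset.mem_univ, true_and] at hi ⊢
        by_cases hgood : (i:ℕ) < N - T
        · left
          obtain ⟨θ, hθ0, hθ1, hyi⟩ := hrel i hgood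
          have hxu : u ≤ x i := le_trans hua hi.1
          have hxv : x i < v - 1/m := lt_of_lt_of_le hi.2 hbv
          rcases fract_shift (x i) θ (hx0 i) (hx1 i) hθ0 (le_trans hθ1 hβ1) with ⟨h1, h2⟩ | ⟨h1, h2⟩
          · rw [hyi, h2]
            constructor <;> linarith
          · exfalso; linarith
        · right; omega
      set C2 : ℕ := ((Finset.univ : Finset (Fin N)).filter fun i : Fin N =>
          (a'':ℝ)/m ≤ x i ∧ x i < (b'':ℝ)/m).card with hC2
      have h1 : C2 ≤ C + T := by
        have hc1 := Finset.card_le_card hsub2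
        have hc3 := Finset.card_union_le
          ((Finset.univ : Finset (Fin N)).filter fun i : Fin N => u ≤ y i ∧ y i < v)
          ((Finset.univ : Finset (Fin N)).filter fun i : Fin N => N - T ≤ (i:ℕ))
        have hc4 := card_tail N T
        omega
      have hg2 := Hg a'' b'' hab hb''m
      rw [abs_sub_le_iff] at hg2
      have hlen : (v-u) - 3/m ≤ (b'':ℝ)/m - (a'':ℝ)/m := by
        have h : (v-u)*m - 3 ≤ (b'':ℝ) - a'' := by linarith
        calc (v-u) - 3/m = ((v-u)*m - 3)/m := by field_simp
          _ ≤ ((b'':ℝ) - a'')/m := by gcongr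
          _ = (b'':ℝ)/m - (a'':ℝ)/m := sub_div _ _ _
      have h2 : ((b'':ℝ)/m - (a'':ℝ)/m) - η ≤ (C2:ℝ)/N := by linarith [hg2.2]
      have h1R : (C2:ℝ)/N ≤ (C:ℝ)/N + (T:ℝ)/N := by
        have hcast : (C2:ℝ) ≤ (C:ℝ) + T := by exact_mod_cast h1
        calc (C2:ℝ)/N ≤ ((C:ℝ) + T)/N := by gcongr
          _ = (C:ℝ)/N + (T:ℝ)/N := by ring
      have h4m : 3/(m:ℝ) + 1/m = 4/m := by ring
      linarith

set_option maxHeartbeats 2000000 in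
theorem stmt6 (s r : ℕ) (hs : 2 ≤ s) (hr : 2 ≤ r) (a : ℕ) (ha : 0 < a)
    (ε : ℝ) (hε0 : 0 < ε) (hε1 : ε < 1) :
    ∃ (F : Finset (ℝ × ℝ)) (ℓ₀ : ℕ),
      (∀ p ∈ F, 0 ≤ p.1 ∧ p.1 < p.2 ∧ p.2 ≤ 1) ∧ 0 < ℓ₀ ∧
      ∀ ℓ ≥ ℓ₀, ∀ ξ₀ ξ : ℝ,
        ξ₀ ≤ ξ → ξ < ξ₀ + ((s : ℝ) ^ bRad (a + ℓ) s)⁻¹ →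
        famDisc F (fun i : Fin (bRad (a + ℓ) r - bRad a r) =>
            Int.fract ((r : ℝ) ^ (bRad a r + 1 + (i : ℕ)) * ξ₀)) < (ε / 10) ^ 4 →
        seqDisc (fun i : Fin (bRad (a + ℓ) r - bRad a r) =>
            Int.fract ((r : ℝ) ^ (bRad a r + 1 + (i : ℕ)) * ξ)) < ε := by
  classical
  have hη0 : (0:ℝ) ≤ (ε/10)^4 := by positivity
  set m : ℕ := ⌈(40:ℝ)/ε⌉₊ with hmdef
  have hmge : (40:ℝ)/ε ≤ m := Nat.le_ceil _
  have hm40 : (40:ℝ) ≤ m := by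
    have h : (40:ℝ) ≤ 40/ε := by
      rw [le_div_iff₀ hε0]; nlinarith
    linarith
  have hm : 1 ≤ m := by
    have : (1:ℝ) ≤ m := by linarith
    exact_mod_cast this
  have hmR0 : (0:ℝ) < m := by linarith
  set T : ℕ := m + 1 with hTdef
  set K : ℕ := ⌈(10:ℝ)*T/ε⌉₊ with hKdef
  refine ⟨((Finset.range (m+1) ×ˢ Finset.range (m+1)).filter fun q => q.1 < q.2).image
      (fun q => ((q.1:ℝ)/m, (q.2:ℝ)/m)), r*(K+2), ?_, ?_, ?_⟩
  · rintro p hp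
    simp only [Finset.mem_image, Finset.mem_filter, Finset.mem_product, Finset.mem_range] at hp
    obtain ⟨q, ⟨⟨hq1, hq2⟩, hqlt⟩, rfl⟩ := hp
    refine ⟨by positivity, ?_, ?_⟩
    · have hq : (q.1:ℝ) < q.2 := by exact_mod_cast hqlt
      exact div_lt_div_of_pos_right hq hmR0
    · rw [div_le_one hmR0]
      exact_mod_cast (by omega : q.2 ≤ m)
  · exact Nat.mul_pos (by omega) (by omega)
  · intro ℓ hℓ ξ₀ ξ hle hlt hfam
    set B := bRad a r with hB
    set J := bRad (a+ℓ) r with hJ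
    have hr1 : (1:ℝ) < r := by exact_mod_cast (by omega : 1 < r)
    have hs1 : (1:ℝ) < s := by exact_mod_cast (by omega : 1 < s)
    have hlogr : (0:ℝ) < Real.log r := Real.log_pos hr1
    have hlogs : (0:ℝ) < Real.log s := Real.log_pos hs1
    have hBJ : B ≤ J := by
      apply Nat.ceil_le_ceil
      gcongr
      exact_mod_cast (by omega : a ≤ a + ℓ)
    set N := J - B with hNdef
    have hNcast : (N:ℝ) = (J:ℝ) - B := by
      rw [hNdef]; exact Nat.cast_sub hBJ
    have haℓ : ((a+ℓ:ℕ):ℝ) = (a:ℝ) + ℓ := by push_cast; ring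
    have hJge : ((a:ℝ) + ℓ)/Real.log r ≤ J := by rw [← haℓ]; exact Nat.le_ceil _
    have hJle : (J:ℝ) ≤ ((a:ℝ) + ℓ)/Real.log r + 1 := by
      rw [← haℓ]
      exact le_of_lt (Nat.ceil_lt_add_one (by positivity))
    have hBle : (B:ℝ) ≤ (a:ℝ)/Real.log r + 1 :=
      le_of_lt (Nat.ceil_lt_add_one (by positivity))
    have hBge : (a:ℝ)/Real.log r ≤ B := Nat.le_ceil _
    have hKge : (10:ℝ)*T/ε ≤ K := Nat.le_ceil _
    have hKT0 : (0:ℝ) ≤ (10:ℝ)*T/ε := by positivity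
    have hlr : Real.log r ≤ r := by
      have := Real.log_le_sub_one_of_pos (by positivity : (0:ℝ) < (r:ℝ)); linarith
    have hℓr : ((r*(K+2):ℕ):ℝ) ≤ (ℓ:ℝ) := by exact_mod_cast hℓ
    have hNge : (10:ℝ)*T/ε + 1 ≤ N := by
      have h1 : (ℓ:ℝ)/Real.log r - 1 ≤ N := by
        rw [hNcast]
        have hd : ((a:ℝ) + ℓ)/Real.log r - (a:ℝ)/Real.log r = (ℓ:ℝ)/Real.log r := by
          field_simp; ring
        linarith
      have h2 : (ℓ:ℝ)/(r:ℝ) ≤ (ℓ:ℝ)/Real.log r := by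
        gcongr
      have h3 : (K:ℝ)+2 ≤ (ℓ:ℝ)/(r:ℝ) := by
        rw [le_div_iff₀ (by positivity : (0:ℝ) < (r:ℝ))]
        calc ((K:ℝ)+2)*(r:ℝ) = ((r*(K+2):ℕ):ℝ) := by push_cast; ring
          _ ≤ (ℓ:ℝ) := hℓr
      linarith
    have hNR : (0:ℝ) < N := by linarith
    have hN0 : 0 < N := by exact_mod_cast hNR
    have hTN : (T:ℝ)/N ≤ ε/10 := by
      rw [div_le_iff₀ hNR]
      have h1 : (10:ℝ)*T/ε * (ε/10) = T := by field_simp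
      nlinarith [mul_le_mul_of_nonneg_right hNge (by positivity : (0:ℝ) ≤ ε/10)]
    -- the two sequences
    set xf : Fin N → ℝ := fun i => Int.fract ((r : ℝ) ^ (B + 1 + (i : ℕ)) * ξ₀) with hxf
    set yf : Fin N → ℝ := fun i => Int.fract ((r : ℝ) ^ (B + 1 + (i : ℕ)) * ξ) with hyf
    have hx0 : ∀ i, 0 ≤ xf i := fun i => Int.fract_nonneg _
    have hx1 : ∀ i, xf i < 1 := fun i => Int.fract_lt_one _
    have hrel : ∀ i : Fin N, (i : ℕ) < N - T →
        ∃ θ : ℝ, 0 ≤ θ ∧ θ ≤ 1 / m ∧ yf i = Int.fract (xf i + θ) := by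
      intro i hi
      set j : ℕ := B + 1 + (i:ℕ) with hj
      refine ⟨(r:ℝ)^j * (ξ - ξ₀), mul_nonneg (by positivity) (by linarith), ?_, ?_⟩
      · set S : ℕ := bRad (a+ℓ) s with hS
        have hsS : ((a:ℝ)+ℓ)/Real.log s ≤ (S:ℝ) := by
          rw [← haℓ]; exact Nat.le_ceil _
        have hexpS : Real.exp ((a:ℝ)+ℓ) ≤ (s:ℝ)^S := by
          have h1 : (s:ℝ)^S = Real.exp (S * Real.log s) := by
            rw [← Real.log_pow, Real.exp_log (by positivity)]
          rw [h1]
          apply Real.exp_le_exp.2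
          have h2 := mul_le_mul_of_nonneg_right hsS hlogs.le
          rw [div_mul_cancel₀ _ (ne_of_gt hlogs)] at h2
          linarith
        have hjJ : j + m + 1 ≤ J := by
          have h1 : N = J - B := hNdef
          have h2 : T = m + 1 := hTdef
          omega
        have hrj : (r:ℝ)^j * m ≤ Real.exp ((a:ℝ)+ℓ) := by
          have hrj1 : (r:ℝ)^j = Real.exp (j * Real.log r) := by
            rw [← Real.log_pow, Real.exp_log (by positivity)]
          have hrm : (m:ℝ) ≤ Real.exp (m * Real.log r) := by
            have h2m : (m:ℝ) ≤ (2:ℝ)^m := by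
              have := (Nat.lt_two_pow_self (n := m)).le
              exact_mod_cast this
            have h2r : (2:ℝ)^m ≤ (r:ℝ)^m := by
              apply pow_le_pow_left₀ (by norm_num)
              exact_mod_cast hr
            have h3 : (r:ℝ)^m = Real.exp (m * Real.log r) := by
              rw [← Real.log_pow, Real.exp_log (by positivity)]
            linarith
          calc (r:ℝ)^j * m ≤ Real.exp (j * Real.log r) * Real.exp (m * Real.log r) := by
                rw [hrj1]
                exact mul_le_mul_of_nonneg_left hrm (by positivity)
            _ = Real.exp (((j:ℝ) + m) * Real.log r) := by
                rw [← Real.exp_add]; ring_nf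
            _ ≤ Real.exp ((a:ℝ)+ℓ) := by
                apply Real.exp_le_exp.2
                have h1 : ((j:ℝ) + m) ≤ (J:ℝ) - 1 := by
                  have h0 : ((j + m + 1 : ℕ) : ℝ) ≤ (J:ℝ) := by exact_mod_cast hjJ
                  push_cast at h0
                  linarith
                have h2 : ((J:ℝ) - 1) * Real.log r ≤ (a:ℝ)+ℓ := by
                  have h3 : (J:ℝ) - 1 ≤ ((a:ℝ)+ℓ)/Real.log r := by linarith
                  have h4 := mul_le_mul_of_nonneg_right h3 hlogr.le
                  rw [div_mul_cancel₀ _ (ne_of_gt hlogr)] at h4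
                  linarith
                nlinarith [hlogr]
        have hδ : ξ - ξ₀ ≤ ((s:ℝ)^S)⁻¹ := by linarith [hlt]
        have hE0 : (0:ℝ) < Real.exp ((a:ℝ)+ℓ) := Real.exp_pos _
        have hinv : ((s:ℝ)^S)⁻¹ ≤ (Real.exp ((a:ℝ)+ℓ))⁻¹ := by
          apply inv_anti₀ hE0 hexpS
        calc (r:ℝ)^j * (ξ - ξ₀) ≤ (r:ℝ)^j * (Real.exp ((a:ℝ)+ℓ))⁻¹ :=
              mul_le_mul_of_nonneg_left (le_trans hδ hinv) (by positivity)
          _ ≤ 1/m := by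
              rw [le_div_iff₀ hmR0]
              have heq : (r:ℝ)^j * (Real.exp ((a:ℝ)+ℓ))⁻¹ * m
                  = ((r:ℝ)^j * m) / Real.exp ((a:ℝ)+ℓ) := by ring
              rw [heq, div_le_one hE0]
              exact hrj
      · have hfr := Int.floor_add_fract ((r:ℝ)^j * ξ₀)
        have hz : (r:ℝ)^j * ξ = ((⌊(r:ℝ)^j * ξ₀⌋ : ℤ) : ℝ)
            + (Int.fract ((r:ℝ)^j * ξ₀) + (r:ℝ)^j * (ξ - ξ₀)) := by
          ring_nf
          ring_nf at hfr
          linarith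
        show Int.fract ((r:ℝ)^j * ξ) = Int.fract (Int.fract ((r:ℝ)^j * ξ₀) + (r:ℝ)^j * (ξ - ξ₀))
        rw [hz, Int.fract_intCast_add]
    have Hg : ∀ p q : ℕ, p < q → q ≤ m →
        |((Finset.univ.filter fun i : Fin N => (p : ℝ)/m ≤ xf i ∧ xf i < (q : ℝ)/m).card : ℝ)/N
          - ((q : ℝ)/m - (p : ℝ)/m)| ≤ (ε/10)^4 := by
      intro p q hpq hqm
      set F : Finset (ℝ × ℝ) := ((Finset.range (m+1) ×ˢ Finset.range (m+1)).filter
          fun q => q.1 < q.2).image (fun q => ((q.1:ℝ)/m, (q.2:ℝ)/m)) with hF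
      have hmem : ((p:ℝ)/m, (q:ℝ)/m) ∈ F := by
        rw [hF]
        exact Finset.mem_image.2 ⟨(p,q), Finset.mem_filter.2 ⟨Finset.mem_product.2
          ⟨Finset.mem_range.2 (by omega), Finset.mem_range.2 (by omega)⟩, hpq⟩, rfl⟩
      have hbdd : BddAbove { d : ℝ | ∃ pp ∈ F,
          d = |((Finset.univ.filter fun n : Fin N => pp.1 ≤ xf n ∧ xf n < pp.2).card : ℝ) / N
            - (pp.2 - pp.1)| } := by
        refine ⟨2, ?_⟩
        rintro d ⟨pp, hpp, rfl⟩
        rw [hF] at hpp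
        simp only [Finset.mem_image, Finset.mem_filter, Finset.mem_product,
          Finset.mem_range] at hpp
        obtain ⟨qq, ⟨⟨hq1, hq2⟩, hqlt⟩, rfl⟩ := hpp
        have h1 : ((Finset.univ.filter fun n : Fin N =>
            (qq.1:ℝ)/m ≤ xf n ∧ xf n < (qq.2:ℝ)/m).card : ℝ)/N ≤ 1 := by
          rw [div_le_one hNR]
          exact_mod_cast (Finset.card_filter_le _ _).trans_eq (by simp)
        have h2 : (0:ℝ) ≤ ((Finset.univ.filter fun n : Fin N =>
            (qq.1:ℝ)/m ≤ xf n ∧ xf n < (qq.2:ℝ)/m).card : ℝ)/N := by positivity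
        have h3 : (0:ℝ) ≤ (qq.1:ℝ)/m := by positivity
        have h4 : (qq.2:ℝ)/m ≤ 1 := by
          rw [div_le_one hmR0]
          exact_mod_cast (by omega : qq.2 ≤ m)
        have h5 : (qq.1:ℝ)/m ≤ 1 := by
          rw [div_le_one hmR0]
          exact_mod_cast (by omega : qq.1 ≤ m)
        have h6 : (0:ℝ) ≤ (qq.2:ℝ)/m := by positivity
        show |((Finset.univ.filter fun n : Fin N =>
            (qq.1:ℝ)/m ≤ xf n ∧ xf n < (qq.2:ℝ)/m).card : ℝ)/N - ((qq.2:ℝ)/m - (qq.1:ℝ)/m)| ≤ 2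
        rw [abs_sub_le_iff]
        constructor <;> nlinarith
      have hd : |((Finset.univ.filter fun i : Fin N =>
          (p : ℝ)/m ≤ xf i ∧ xf i < (q : ℝ)/m).card : ℝ)/N - ((q : ℝ)/m - (p : ℝ)/m)|
          ∈ { d : ℝ | ∃ pp ∈ F,
          d = |((Finset.univ.filter fun n : Fin N => pp.1 ≤ xf n ∧ xf n < pp.2).card : ℝ) / N
            - (pp.2 - pp.1)| } := ⟨((p:ℝ)/m, (q:ℝ)/m), hmem, rfl⟩
      have hle2 := le_csSup hbdd hd
      have hfam2 : sSup { d : ℝ | ∃ pp ∈ F,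
          d = |((Finset.univ.filter fun n : Fin N => pp.1 ≤ xf n ∧ xf n < pp.2).card : ℝ) / N
            - (pp.2 - pp.1)| } < (ε/10)^4 := hfam
      linarith
    have hkey := key N T m hm hN0 ((ε/10)^4) hη0 xf yf hx0 hx1 hrel Hg
    -- final numeric bound
    have hm4 : 4/(m:ℝ) ≤ ε/10 := by
      rw [div_le_div_iff₀ hmR0 (by norm_num : (0:ℝ) < 10)]
      have h40 : (40/ε)*ε = 40 := by field_simp
      nlinarith [mul_le_mul_of_nonneg_right hmge hε0.le]
    have hε4 : (ε/10)^4 ≤ ε/10000 := by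
      have hi : (ε/10)^4 = ε^4/10000 := by ring
      have h3 : ε^3 ≤ 1 := pow_le_one₀ hε0.le hε1.le
      nlinarith [pow_pos hε0 3]
    have htot : 2*((ε/10)^4) + 4/(m:ℝ) + (T:ℝ)/N ≤ ε/2 := by linarith
    show seqDisc yf < ε
    rw [seqDisc]
    have hne : { d : ℝ | ∃ u v : ℝ, 0 ≤ u ∧ u < v ∧ v ≤ 1 ∧
        d = |((Finset.univ.filter fun n : Fin N => u ≤ yf n ∧ yf n < v).card : ℝ) / N - (v - u)| }.Nonempty := by
      exact ⟨_, 0, 1, le_refl _, one_pos, le_refl _, rfl⟩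
    have hb : ∀ d ∈ { d : ℝ | ∃ u v : ℝ, 0 ≤ u ∧ u < v ∧ v ≤ 1 ∧
        d = |((Finset.univ.filter fun n : Fin N => u ≤ yf n ∧ yf n < v).card : ℝ) / N - (v - u)| },
        d ≤ ε/2 := by
      rintro d ⟨u, v, hu, huv, hv, rfl⟩
      have h := hkey u v hu huv hv
      calc |((Finset.univ.filter fun n : Fin N => u ≤ yf n ∧ yf n < v).card : ℝ) / N - (v - u)|
          ≤ 2*((ε/10)^4) + 4/(m:ℝ) + (T:ℝ)/N := h
        _ ≤ ε/2 := htot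
    exact lt_of_le_of_lt (csSup_le hne hb) (by linarith)
end

section
/- For any base s, any positive integer ℓ, and any positive real numbers ε and δ, there is an N₀ such that for all N ≥ N₀ the number of strings v ∈ {0,…,s−1}^N with discrete discrepancy C(ℓ,v) ≥ ε is strictly less than δ·s^N. -/
open Finset

/- `occ w u` is the number of occurrences of the block `u` (of length `ℓ`) in the string
`w` (of length `N`). -/
open Classical in
noncomputable def occ {s N : ℕ} (w : Fin N → Fin s) {ℓ : ℕ} (u : Fin ℓ → Fin s) : ℕ :=
  ((Finset.range (N + 1 - ℓ)).filter fun i =>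
    ∀ (j : Fin ℓ) (h : i + (j : ℕ) < N), w ⟨i + (j : ℕ), h⟩ = u j).card

/- `discreteDisc ℓ w = C(ℓ, w) = max_{u ∈ {0,…,s−1}^ℓ} |occ(w,u)/N − s^{−ℓ}|`. -/
noncomputable def discreteDisc {s N : ℕ} (ℓ : ℕ) (w : Fin N → Fin s) : ℝ :=
  sSup { d : ℝ | ∃ u : Fin ℓ → Fin s, d = |(occ w u : ℝ) / N - ((s : ℝ) ^ ℓ)⁻¹| }

open Classical in
noncomputable def Cond {s N : ℕ} (ℓ : ℕ) (i : ℕ) (u : Fin ℓ → Fin s) (w : Fin N → Fin s) : Prop :=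
  ∀ (j : Fin ℓ) (h : i + (j : ℕ) < N), w ⟨i + (j : ℕ), h⟩ = u j

lemma card_eqOn {s N : ℕ} (A : Finset (Fin N)) (f : Fin N → Fin s) :
    (Finset.univ.filter fun w : Fin N → Fin s => ∀ a ∈ A, w a = f a).card = s ^ (N - A.card) := by
  classical
  have e : {w : Fin N → Fin s // ∀ a ∈ A, w a = f a} ≃ ({x : Fin N // x ∉ A} → Fin s) :=
    { toFun := fun w x => w.1 x.1
      invFun := fun g => ⟨fun x => if h : x ∈ A then f x else g ⟨x, h⟩, fun a ha => by simp [ha]⟩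
      left_inv := fun w => by
        ext x
        by_cases h : x ∈ A
        · simp [h, w.2 x h]
        · simp [h]
      right_inv := fun g => by
        ext x
        simp [x.2] }
  have h1 := Fintype.card_congr e
  rw [Fintype.card_subtype] at h1
  rw [h1, Fintype.card_fun, Fintype.card_fin]
  congr 1
  rw [Fintype.card_subtype_compl, Fintype.card_coe, Fintype.card_fin]

open Classical in
lemma count_one {s N ℓ : ℕ} (hℓ : 0 < ℓ) (u : Fin ℓ → Fin s) (i : ℕ) (hi : i + ℓ ≤ N) :
    (Finset.univ.filter fun w : Fin N → Fin s => Cond ℓ i u w).card = s ^ (N - ℓ) := by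
  classical
  set g : Fin ℓ → Fin N := fun j => ⟨i + j, lt_of_lt_of_le (Nat.add_lt_add_left j.isLt i) hi⟩
    with hg
  have hginj : Function.Injective g := by
    intro a b hab
    simp only [hg, Fin.mk.injEq] at hab
    exact Fin.ext (by omega)
  set A : Finset (Fin N) := Finset.univ.image g with hA
  set f : Fin N → Fin s := fun x => u ⟨((x : ℕ) - i) % ℓ, Nat.mod_lt _ hℓ⟩ with hf
  have hfg : ∀ j : Fin ℓ, f (g j) = u j := by
    intro j
    have h2 : (((g j : ℕ)) - i) % ℓ = (j : ℕ) := by simp [hg, Nat.mod_eq_of_lt j.isLt]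
    simp only [hf]
    congr 1
    exact Fin.ext h2
  have key : ∀ w : Fin N → Fin s, (Cond ℓ i u w ↔ ∀ a ∈ A, w a = f a) := by
    intro w
    constructor
    · intro hc a ha
      simp only [hA, Finset.mem_image, Finset.mem_univ, true_and] at ha
      obtain ⟨j, rfl⟩ := ha
      rw [hfg j]
      exact hc j (g j).isLt
    · intro hh j h
      have hm : g j ∈ A := by simp [hA]
      have h3 := hh _ hm
      rw [hfg j] at h3
      exact h3
  have hcard : A.card = ℓ := by
    rw [hA, Finset.card_image_of_injective _ hginj, Finset.card_univ, Fintype.card_fin]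
  have heq : (Finset.univ.filter fun w : Fin N → Fin s => Cond ℓ i u w)
      = (Finset.univ.filter fun w => ∀ a ∈ A, w a = f a) :=
    Finset.filter_congr (fun w _ => key w)
  rw [heq, card_eqOn, hcard]

open Classical in
lemma count_two {s N ℓ : ℕ} (hℓ : 0 < ℓ) (u : Fin ℓ → Fin s) (i k : ℕ)
    (hik : i + ℓ ≤ k) (hk : k + ℓ ≤ N) :
    (Finset.univ.filter fun w : Fin N → Fin s => Cond ℓ i u w ∧ Cond ℓ k u w).card
      = s ^ (N - (ℓ + ℓ)) := by
  classical
  have hi : i + ℓ ≤ N := le_trans (le_trans hik (Nat.le_add_right k ℓ)) hk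
  set gi : Fin ℓ → Fin N := fun j => ⟨i + j, lt_of_lt_of_le (Nat.add_lt_add_left j.isLt i) hi⟩
    with hgi
  set gk : Fin ℓ → Fin N := fun j => ⟨k + j, lt_of_lt_of_le (Nat.add_lt_add_left j.isLt k) hk⟩
    with hgk
  have hgiinj : Function.Injective gi := by
    intro a b hab
    simp only [hgi, Fin.mk.injEq] at hab
    exact Fin.ext (by omega)
  have hgkinj : Function.Injective gk := by
    intro a b hab
    simp only [hgk, Fin.mk.injEq] at hab
    exact Fin.ext (by omega)
  set A : Finset (Fin N) := Finset.univ.image gi ∪ Finset.univ.image gk with hA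
  set f : Fin N → Fin s :=
    fun x => u ⟨(if (x : ℕ) < i + ℓ then (x : ℕ) - i else (x : ℕ) - k) % ℓ, Nat.mod_lt _ hℓ⟩
    with hf
  have hfgi : ∀ j : Fin ℓ, f (gi j) = u j := by
    intro j
    have hv : ((gi j : ℕ)) = i + (j : ℕ) := by simp [hgi]
    have h2 : (if ((gi j : ℕ)) < i + ℓ then ((gi j : ℕ)) - i else ((gi j : ℕ)) - k) % ℓ
        = (j : ℕ) := by
      rw [hv, if_pos (Nat.add_lt_add_left j.isLt i)]
      simp [Nat.mod_eq_of_lt j.isLt]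
    simp only [hf]
    congr 1
    exact Fin.ext h2
  have hfgk : ∀ j : Fin ℓ, f (gk j) = u j := by
    intro j
    have hv : ((gk j : ℕ)) = k + (j : ℕ) := by simp [hgk]
    have h2 : (if ((gk j : ℕ)) < i + ℓ then ((gk j : ℕ)) - i else ((gk j : ℕ)) - k) % ℓ
        = (j : ℕ) := by
      rw [hv, if_neg (by omega)]
      simp [Nat.mod_eq_of_lt j.isLt]
    simp only [hf]
    congr 1
    exact Fin.ext h2
  have key : ∀ w : Fin N → Fin s,
      ((Cond ℓ i u w ∧ Cond ℓ k u w) ↔ ∀ a ∈ A, w a = f a) := by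
    intro w
    constructor
    · intro hc a ha
      simp only [hA, Finset.mem_union, Finset.mem_image, Finset.mem_univ, true_and] at ha
      rcases ha with ⟨j, rfl⟩ | ⟨j, rfl⟩
      · rw [hfgi j]; exact hc.1 j (gi j).isLt
      · rw [hfgk j]; exact hc.2 j (gk j).isLt
    · intro hh
      constructor
      · intro j h
        have hm : gi j ∈ A := by simp [hA]
        have h3 := hh _ hm
        rw [hfgi j] at h3
        exact h3
      · intro j h
        have hm : gk j ∈ A := by simp [hA]
        have h3 := hh _ hm
        rw [hfgk j] at h3
        exact h3
  have hdisj : Disjoint (Finset.univ.image gi) (Finset.univ.image gk) := by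
    rw [Finset.disjoint_left]
    intro x hx hx'
    simp only [Finset.mem_image, Finset.mem_univ, true_and] at hx hx'
    obtain ⟨j1, rfl⟩ := hx
    obtain ⟨j2, h2⟩ := hx'
    have := congrArg (fun y : Fin N => (y : ℕ)) h2
    simp only [hgi, hgk] at this
    have := j1.isLt
    omega
  have hcard : A.card = ℓ + ℓ := by
    rw [hA, Finset.card_union_of_disjoint hdisj,
      Finset.card_image_of_injective _ hgiinj, Finset.card_image_of_injective _ hgkinj,
      Finset.card_univ, Fintype.card_fin]
  have heq : (Finset.univ.filter fun w : Fin N → Fin s => Cond ℓ i u w ∧ Cond ℓ k u w)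
      = (Finset.univ.filter fun w => ∀ a ∈ A, w a = f a) :=
    Finset.filter_congr (fun w _ => key w)
  rw [heq, card_eqOn, hcard]

open Classical in
lemma occ_eq_sum {s N ℓ : ℕ} (u : Fin ℓ → Fin s) (w : Fin N → Fin s) :
    occ w u = ∑ i ∈ Finset.range (N + 1 - ℓ), if Cond ℓ i u w then 1 else 0 := by
  rw [occ, Finset.card_filter]
  refine Finset.sum_congr rfl fun i _ => ?_
  unfold Cond
  congr

open Classical in
lemma sum_occ {s N ℓ : ℕ} (hℓ : 0 < ℓ) (hN : ℓ ≤ N) (u : Fin ℓ → Fin s) :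
    ∑ w : Fin N → Fin s, occ w u = (N + 1 - ℓ) * s ^ (N - ℓ) := by
  classical
  simp_rw [occ_eq_sum]
  rw [Finset.sum_comm]
  have h : ∀ i ∈ Finset.range (N + 1 - ℓ),
      (∑ w : Fin N → Fin s, if Cond ℓ i u w then 1 else 0) = s ^ (N - ℓ) := by
    intro i hi
    rw [← Finset.card_filter]
    exact count_one hℓ u i (by simp only [Finset.mem_range] at hi; omega)
  rw [Finset.sum_congr rfl h, Finset.sum_const, Finset.card_range, smul_eq_mul]

open Classical in
lemma pair_bound {s N ℓ : ℕ} (hℓ : 0 < ℓ) (hN : ℓ ≤ N) (u : Fin ℓ → Fin s) (i j : ℕ)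
    (hi : i < N + 1 - ℓ) (hj : j < N + 1 - ℓ) :
    (Finset.univ.filter fun w : Fin N → Fin s => Cond ℓ i u w ∧ Cond ℓ j u w).card
      ≤ s ^ (N - (ℓ + ℓ)) + if i < j + ℓ ∧ j < i + ℓ then s ^ (N - ℓ) else 0 := by
  classical
  by_cases hnear : i < j + ℓ ∧ j < i + ℓ
  · rw [if_pos hnear]
    have hsub : (Finset.univ.filter fun w : Fin N → Fin s => Cond ℓ i u w ∧ Cond ℓ j u w)
        ⊆ Finset.univ.filter fun w : Fin N → Fin s => Cond ℓ i u w := by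
      intro w hw
      simp only [Finset.mem_filter] at hw ⊢
      exact ⟨hw.1, hw.2.1⟩
    calc _ ≤ (Finset.univ.filter fun w : Fin N → Fin s => Cond ℓ i u w).card :=
          Finset.card_le_card hsub
      _ = s ^ (N - ℓ) := count_one hℓ u i (by omega)
      _ ≤ _ := Nat.le_add_left _ _
  · rw [if_neg hnear, add_zero]
    rcases (by omega : i + ℓ ≤ j ∨ j + ℓ ≤ i) with hc | hc
    · exact le_of_eq (count_two hℓ u i j hc (by omega))
    · have heq : (Finset.univ.filter fun w : Fin N → Fin s => Cond ℓ i u w ∧ Cond ℓ j u w)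
          = Finset.univ.filter fun w : Fin N → Fin s => Cond ℓ j u w ∧ Cond ℓ i u w :=
        Finset.filter_congr (fun w _ => and_comm)
      rw [heq]
      exact le_of_eq (count_two hℓ u j i hc (by omega))

open Classical in
lemma sum_occ_sq {s N ℓ : ℕ} (hℓ : 0 < ℓ) (hN : ℓ ≤ N) (u : Fin ℓ → Fin s) :
    ∑ w : Fin N → Fin s, (occ w u) ^ 2
      ≤ (N + 1 - ℓ) ^ 2 * s ^ (N - (ℓ + ℓ)) + (N + 1 - ℓ) * (2 * ℓ) * s ^ (N - ℓ) := by
  classical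
  set M := N + 1 - ℓ with hM
  have expand : ∀ w : Fin N → Fin s, (occ w u) ^ 2
      = ∑ p ∈ Finset.range M ×ˢ Finset.range M,
          if Cond ℓ p.1 u w ∧ Cond ℓ p.2 u w then 1 else 0 := by
    intro w
    rw [Finset.sum_product, occ_eq_sum, sq, Finset.sum_mul_sum]
    refine Finset.sum_congr rfl fun i _ => Finset.sum_congr rfl fun j _ => ?_
    by_cases hp : Cond ℓ i u w <;> by_cases hq : Cond ℓ j u w <;> simp [hp, hq]
  calc ∑ w : Fin N → Fin s, (occ w u) ^ 2
      = ∑ p ∈ Finset.range M ×ˢ Finset.range M,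
          ∑ w : Fin N → Fin s, if Cond ℓ p.1 u w ∧ Cond ℓ p.2 u w then 1 else 0 := by
        simp_rw [expand]; exact Finset.sum_comm
    _ = ∑ p ∈ Finset.range M ×ˢ Finset.range M,
          (Finset.univ.filter fun w : Fin N → Fin s =>
            Cond ℓ p.1 u w ∧ Cond ℓ p.2 u w).card := by
        refine Finset.sum_congr rfl fun p _ => ?_
        rw [← Finset.card_filter]
    _ ≤ ∑ p ∈ Finset.range M ×ˢ Finset.range M,
          (s ^ (N - (ℓ + ℓ)) + if p.1 < p.2 + ℓ ∧ p.2 < p.1 + ℓ then s ^ (N - ℓ) else 0) := by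
        refine Finset.sum_le_sum fun p hp => ?_
        rw [Finset.mem_product, Finset.mem_range, Finset.mem_range] at hp
        exact pair_bound hℓ hN u p.1 p.2 hp.1 hp.2
    _ ≤ M ^ 2 * s ^ (N - (ℓ + ℓ)) + M * (2 * ℓ) * s ^ (N - ℓ) := by
        rw [Finset.sum_add_distrib, Finset.sum_const, Finset.card_product, Finset.card_range,
          smul_eq_mul]
        gcongr ?_ + ?_
        · apply le_of_eq; ring
        · rw [Finset.sum_product]
          have hinner : ∀ i ∈ Finset.range M,
              (∑ j ∈ Finset.range M, if i < j + ℓ ∧ j < i + ℓ then s ^ (N - ℓ) else 0)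
                ≤ 2 * ℓ * s ^ (N - ℓ) := by
            intro i _
            rw [← Finset.sum_filter]
            have hss : (Finset.range M).filter (fun j => i < j + ℓ ∧ j < i + ℓ)
                ⊆ Finset.Ico (i + 1 - ℓ) (i + ℓ) := by
              intro j hj
              simp only [Finset.mem_filter, Finset.mem_range, Finset.mem_Ico] at hj ⊢
              omega
            calc (∑ _j ∈ (Finset.range M).filter (fun j => i < j + ℓ ∧ j < i + ℓ),
                    s ^ (N - ℓ))
                = ((Finset.range M).filter (fun j => i < j + ℓ ∧ j < i + ℓ)).card
                    * s ^ (N - ℓ) := by rw [Finset.sum_const, smul_eq_mul]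
              _ ≤ 2 * ℓ * s ^ (N - ℓ) := by
                  have := Finset.card_le_card hss
                  rw [Nat.card_Ico] at this
                  exact Nat.mul_le_mul_right _ (by omega)
          calc ∑ i ∈ Finset.range M,
                (∑ j ∈ Finset.range M, if i < j + ℓ ∧ j < i + ℓ then s ^ (N - ℓ) else 0)
              ≤ ∑ _i ∈ Finset.range M, 2 * ℓ * s ^ (N - ℓ) := Finset.sum_le_sum hinner
            _ = M * (2 * ℓ) * s ^ (N - ℓ) := by
                rw [Finset.sum_const, Finset.card_range, smul_eq_mul]; ring

open Classical in
lemma var_bound {s N ℓ : ℕ} (hs : 2 ≤ s) (hℓ : 0 < ℓ) (h2 : 2 * ℓ ≤ N) (u : Fin ℓ → Fin s) :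
    ∑ w : Fin N → Fin s, ((occ w u : ℝ) - ((N + 1 - ℓ : ℕ) : ℝ) / (s : ℝ) ^ ℓ) ^ 2
      ≤ 2 * ℓ * N * (s : ℝ) ^ N := by
  classical
  have hN : ℓ ≤ N := by omega
  set A : ℝ := (s : ℝ) with hA
  have hA1 : (1 : ℝ) ≤ A := by rw [hA]; exact_mod_cast (by omega : 1 ≤ s)
  have hA0 : (0 : ℝ) < A := lt_of_lt_of_le one_pos hA1
  set M : ℕ := N + 1 - ℓ with hMdef
  set c : ℝ := (M : ℝ) / A ^ ℓ with hc
  set X : ℝ := A ^ (N - (ℓ + ℓ)) with hX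
  set Y : ℝ := A ^ (N - ℓ) with hY
  have eYX : Y = X * A ^ ℓ := by
    rw [hY, hX, ← pow_add]; congr 1; omega
  have eN : A ^ N = X * A ^ ℓ * A ^ ℓ := by
    rw [hX, ← pow_add, ← pow_add]; congr 1; omega
  have hpow : (0 : ℝ) < A ^ ℓ := pow_pos hA0 ℓ
  have hS1 : ∑ w : Fin N → Fin s, (occ w u : ℝ) = (M : ℝ) * Y := by
    have := sum_occ (s := s) hℓ hN u
    have hcast := congrArg (fun n : ℕ => (n : ℝ)) this
    push_cast at hcast
    rw [hY]; push_cast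
    exact hcast
  have hS2 : ∑ w : Fin N → Fin s, (occ w u : ℝ) ^ 2 ≤ (M : ℝ) ^ 2 * X + (M : ℝ) * (2 * ℓ) * Y := by
    have := sum_occ_sq (s := s) hℓ hN u
    have hcast := (Nat.cast_le (α := ℝ)).2 this
    push_cast at hcast
    rw [hX, hY]; push_cast
    convert hcast using 2
  have hcardu : ((Fintype.card (Fin N → Fin s) : ℕ) : ℝ) = A ^ N := by
    rw [Fintype.card_fun, Fintype.card_fin, Fintype.card_fin]; push_cast [hA]; ring
  have hexp : ∑ w : Fin N → Fin s, ((occ w u : ℝ) - c) ^ 2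
      = (∑ w : Fin N → Fin s, (occ w u : ℝ) ^ 2)
        - 2 * c * (∑ w : Fin N → Fin s, (occ w u : ℝ))
        + (Fintype.card (Fin N → Fin s) : ℝ) * c ^ 2 := by
    rw [Finset.mul_sum, ← Finset.sum_sub_distrib]
    rw [← Finset.card_univ, ← nsmul_eq_mul, ← Finset.sum_const, ← Finset.sum_add_distrib]
    refine Finset.sum_congr rfl fun w _ => ?_
    ring
  have h2c : 2 * c * ((M : ℝ) * Y) = 2 * ((M : ℝ) ^ 2 * X) := by
    rw [hc, eYX]; field_simp
  have hcc : (Fintype.card (Fin N → Fin s) : ℝ) * c ^ 2 = (M : ℝ) ^ 2 * X := by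
    rw [hcardu, hc, eN]; field_simp
  have hMN : (M : ℝ) ≤ (N : ℝ) := by
    have : M ≤ N := by omega
    exact_mod_cast this
  have hYN : Y ≤ A ^ N := by
    rw [hY]; exact pow_le_pow_right₀ hA1 (by omega)
  have hM0 : (0 : ℝ) ≤ (M : ℝ) := Nat.cast_nonneg _
  calc ∑ w : Fin N → Fin s, ((occ w u : ℝ) - c) ^ 2
      ≤ ((M : ℝ) ^ 2 * X + (M : ℝ) * (2 * ℓ) * Y) - 2 * ((M : ℝ) ^ 2 * X)
          + (M : ℝ) ^ 2 * X := by
        rw [hexp, hS1, h2c, hcc]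
        gcongr
    _ = 2 * ℓ * ((M : ℝ) * Y) := by ring
    _ ≤ 2 * ℓ * ((N : ℝ) * A ^ N) := by
        have hℓ0 : (0 : ℝ) ≤ 2 * (ℓ : ℝ) := by positivity
        have hY0 : (0 : ℝ) ≤ Y := le_of_lt (by rw [hY]; exact pow_pos hA0 _)
        apply mul_le_mul_of_nonneg_left _ hℓ0
        exact mul_le_mul hMN hYN hY0 (Nat.cast_nonneg _)
    _ = 2 * ℓ * N * A ^ N := by ring

open Classical in
lemma cheb {s N ℓ : ℕ} (hs : 2 ≤ s) (hℓ : 0 < ℓ) (h2 : 2 * ℓ ≤ N) (u : Fin ℓ → Fin s)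
    (t : ℝ) (ht : 0 < t) :
    ((Finset.univ.filter fun w : Fin N → Fin s =>
        t ≤ |(occ w u : ℝ) - ((N + 1 - ℓ : ℕ) : ℝ) / (s : ℝ) ^ ℓ|).card : ℝ) * t ^ 2
      ≤ 2 * ℓ * N * (s : ℝ) ^ N := by
  classical
  set c : ℝ := ((N + 1 - ℓ : ℕ) : ℝ) / (s : ℝ) ^ ℓ with hc
  set B := Finset.univ.filter fun w : Fin N → Fin s => t ≤ |(occ w u : ℝ) - c| with hB
  have hstep : ∀ w ∈ B, t ^ 2 ≤ ((occ w u : ℝ) - c) ^ 2 := by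
    intro w hw
    rw [hB, Finset.mem_filter] at hw
    calc t ^ 2 ≤ |(occ w u : ℝ) - c| ^ 2 := by
          exact pow_le_pow_left₀ ht.le hw.2 2
      _ = ((occ w u : ℝ) - c) ^ 2 := sq_abs _
  calc (B.card : ℝ) * t ^ 2 = B.card • t ^ 2 := by rw [nsmul_eq_mul]
    _ ≤ ∑ w ∈ B, ((occ w u : ℝ) - c) ^ 2 := Finset.card_nsmul_le_sum B _ _ hstep
    _ ≤ ∑ w : Fin N → Fin s, ((occ w u : ℝ) - c) ^ 2 :=
        Finset.sum_le_sum_of_subset_of_nonneg (Finset.subset_univ B)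
          (fun w _ _ => sq_nonneg _)
    _ ≤ 2 * ℓ * N * (s : ℝ) ^ N := var_bound hs hℓ h2 u

lemma disc_attained {s N ℓ : ℕ} (hs : 2 ≤ s) (v : Fin N → Fin s) :
    ∃ u : Fin ℓ → Fin s, discreteDisc ℓ v = |(occ v u : ℝ) / N - ((s : ℝ) ^ ℓ)⁻¹| := by
  have hne : Nonempty (Fin ℓ → Fin s) := ⟨fun _ => ⟨0, by omega⟩⟩
  set g : (Fin ℓ → Fin s) → ℝ := fun u => |(occ v u : ℝ) / N - ((s : ℝ) ^ ℓ)⁻¹| with hg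
  have hset : { d : ℝ | ∃ u : Fin ℓ → Fin s, d = |(occ v u : ℝ) / N - ((s : ℝ) ^ ℓ)⁻¹| }
      = Set.range g := by
    ext d
    simp only [Set.mem_setOf_eq, Set.mem_range, hg]
    exact ⟨fun ⟨u, h⟩ => ⟨u, h.symm⟩, fun ⟨u, h⟩ => ⟨u, h.symm⟩⟩
  have hmem : sSup (Set.range g) ∈ Set.range g :=
    (Set.range_nonempty g).csSup_mem (Set.finite_range g)
  rw [discreteDisc, hset]
  obtain ⟨u, hu⟩ := hmem
  exact ⟨u, hu.symm⟩

open Classical in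
theorem stmt8 (s : ℕ) (hs : 2 ≤ s) (ℓ : ℕ) (hℓ : 0 < ℓ)
    (ε δ : ℝ) (hε : 0 < ε) (hδ : 0 < δ) :
    ∃ N₀ : ℕ, ∀ N ≥ N₀,
      (((Finset.univ : Finset (Fin N → Fin s)).filter fun v =>
          ε ≤ discreteDisc ℓ v).card : ℝ) < δ * (s : ℝ) ^ N := by
  classical
  obtain ⟨n, hn⟩ := exists_nat_gt
    (max (8 * ℓ * (s : ℝ) ^ ℓ / (ε ^ 2 * δ)) (2 * ℓ / ε))
  refine ⟨max n (2 * ℓ + 1), fun N hN => ?_⟩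
  have h2 : 2 * ℓ + 1 ≤ N := le_trans (le_max_right _ _) hN
  have hnN : n ≤ N := le_trans (le_max_left _ _) hN
  have hN0 : (0 : ℝ) < N := by exact_mod_cast (by omega : 0 < N)
  have hNK : 8 * ℓ * (s : ℝ) ^ ℓ / (ε ^ 2 * δ) < (N : ℝ) :=
    lt_of_le_of_lt (le_max_left _ _) (lt_of_lt_of_le hn (by exact_mod_cast hnN))
  have hNε : 2 * ℓ / ε < (N : ℝ) :=
    lt_of_le_of_lt (le_max_right _ _) (lt_of_lt_of_le hn (by exact_mod_cast hnN))
  set A : ℝ := (s : ℝ) with hA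
  have hA1 : (1 : ℝ) ≤ A := by rw [hA]; exact_mod_cast (by omega : 1 ≤ s)
  have hA0 : (0 : ℝ) < A := lt_of_lt_of_le one_pos hA1
  have hpow : (0 : ℝ) < A ^ ℓ := pow_pos hA0 ℓ
  have hpowN : (0 : ℝ) < A ^ N := pow_pos hA0 N
  have h1pow : (1 : ℝ) ≤ A ^ ℓ := one_le_pow₀ hA1
  set c : ℝ := ((N + 1 - ℓ : ℕ) : ℝ) / A ^ ℓ with hc
  set t : ℝ := ε * N / 2 with htdef
  have ht : (0 : ℝ) < t := by rw [htdef]; positivity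
  have hεN : 2 * ℓ ≤ ε * N := by
    rw [div_lt_iff₀ hε] at hNε
    nlinarith
  set B : (Fin ℓ → Fin s) → Finset (Fin N → Fin s) := fun u =>
    Finset.univ.filter fun w => t ≤ |(occ w u : ℝ) - c| with hB
  have hcover : ((Finset.univ : Finset (Fin N → Fin s)).filter fun v =>
      ε ≤ discreteDisc ℓ v) ⊆ Finset.univ.biUnion B := by
    intro v hv
    rw [Finset.mem_filter] at hv
    obtain ⟨u, hu⟩ := disc_attained (ℓ := ℓ) hs v
    have hεu : ε ≤ |(occ v u : ℝ) / N - (A ^ ℓ)⁻¹| := by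
      rw [← hu]; exact hv.2
    have habs : ε * N ≤ |(occ v u : ℝ) - (N : ℝ) / A ^ ℓ| := by
      have hrw : (occ v u : ℝ) - (N : ℝ) / A ^ ℓ
          = ((occ v u : ℝ) / N - (A ^ ℓ)⁻¹) * N := by
        field_simp
      rw [hrw, abs_mul, abs_of_pos hN0]
      exact mul_le_mul_of_nonneg_right hεu hN0.le
    have hMc : ((N + 1 - ℓ : ℕ) : ℝ) = (N : ℝ) + 1 - ℓ := by
      have hle : ℓ ≤ N + 1 := by omega
      push_cast [Nat.cast_sub hle]
      ring
    have hℓ1 : (1 : ℝ) ≤ (ℓ : ℝ) := by exact_mod_cast hℓ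
    have hdiff : |(N : ℝ) / A ^ ℓ - c| ≤ (ℓ : ℝ) := by
      rw [hc, hMc]
      have hval : (N : ℝ) / A ^ ℓ - ((N : ℝ) + 1 - ℓ) / A ^ ℓ = ((ℓ : ℝ) - 1) / A ^ ℓ := by
        field_simp
        ring
      rw [hval, abs_of_nonneg (div_nonneg (by linarith) hpow.le)]
      calc ((ℓ : ℝ) - 1) / A ^ ℓ ≤ (ℓ : ℝ) - 1 :=
            div_le_self (by linarith) h1pow
        _ ≤ (ℓ : ℝ) := by linarith
    have htri : |(occ v u : ℝ) - (N : ℝ) / A ^ ℓ|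
        ≤ |(occ v u : ℝ) - c| + |(N : ℝ) / A ^ ℓ - c| := by
      have := abs_sub_le ((occ v u : ℝ)) c ((N : ℝ) / A ^ ℓ)
      rw [abs_sub_comm c ((N : ℝ) / A ^ ℓ)] at this
      exact this
    have hmemB : t ≤ |(occ v u : ℝ) - c| := by
      rw [htdef]
      linarith
    rw [Finset.mem_biUnion]
    exact ⟨u, Finset.mem_univ u, by rw [hB, Finset.mem_filter]; exact ⟨Finset.mem_univ v, hmemB⟩⟩
  have hcount : (((Finset.univ : Finset (Fin N → Fin s)).filter fun v =>
      ε ≤ discreteDisc ℓ v).card : ℝ) ≤ ∑ u : Fin ℓ → Fin s, ((B u).card : ℝ) := by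
    have h1 := Finset.card_le_card hcover
    have h2 := Finset.card_biUnion_le (s := (Finset.univ : Finset (Fin ℓ → Fin s))) (t := B)
    exact_mod_cast le_trans h1 h2
  have hcheb : ∀ u : Fin ℓ → Fin s, ((B u).card : ℝ) * t ^ 2 ≤ 2 * ℓ * N * A ^ N := by
    intro u
    exact cheb hs hℓ (by omega) u t ht
  have htotal : (((Finset.univ : Finset (Fin N → Fin s)).filter fun v =>
      ε ≤ discreteDisc ℓ v).card : ℝ) * t ^ 2 ≤ A ^ ℓ * (2 * ℓ * N * A ^ N) := by
    calc (((Finset.univ : Finset (Fin N → Fin s)).filter fun v =>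
          ε ≤ discreteDisc ℓ v).card : ℝ) * t ^ 2
        ≤ (∑ u : Fin ℓ → Fin s, ((B u).card : ℝ)) * t ^ 2 := by
          exact mul_le_mul_of_nonneg_right hcount (sq_nonneg t)
      _ = ∑ u : Fin ℓ → Fin s, ((B u).card : ℝ) * t ^ 2 := by rw [Finset.sum_mul]
      _ ≤ ∑ _u : Fin ℓ → Fin s, 2 * ℓ * N * A ^ N := Finset.sum_le_sum fun u _ => hcheb u
      _ = (Fintype.card (Fin ℓ → Fin s) : ℝ) * (2 * ℓ * N * A ^ N) := by
          rw [Finset.sum_const, nsmul_eq_mul, Finset.card_univ]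
      _ = A ^ ℓ * (2 * ℓ * N * A ^ N) := by
          rw [Fintype.card_fun, Fintype.card_fin, Fintype.card_fin]
          push_cast [hA]
          ring
  have hkey : 8 * ℓ * A ^ ℓ < ε ^ 2 * δ * N := by
    rw [div_lt_iff₀ (by positivity)] at hNK
    nlinarith
  have hstrict : A ^ ℓ * (2 * ℓ * N * A ^ N) < δ * A ^ N * t ^ 2 := by
    rw [htdef]
    nlinarith [mul_lt_mul_of_pos_right hkey (by positivity : (0 : ℝ) < N * A ^ N / 4)]
  have hfinal := lt_of_le_of_lt htotal hstrict
  have ht2 : (0 : ℝ) < t ^ 2 := by positivity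
  exact (mul_lt_mul_iff_of_pos_right ht2).1 hfinal
end

section
/- Given a positive real number ε, there is an N₀ such that for all N ≥ N₀, the number of binary strings v = (v₁,…,v_N) ∈ {0,1}^N satisfying (1/(2N))·#{m : 0 ≤ m < 2N and {2^m η_v} ∈ [0,1/2)} ≥ 5/8 is strictly greater than (1−ε)·2^N, where η_v = Σ_{j=1}^N v_j 4^{−j}. -/
open Finset

open Classical in
noncomputable def goodCount (N : ℕ) : ℕ :=
  ((Finset.univ : Finset (Fin N → Fin 2)).filter fun v =>
    (5 : ℝ) / 8 ≤ 1 / (2 * (N : ℝ)) *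
      (((Finset.range (2 * N)).filter fun m =>
        Int.fract ((2 : ℝ) ^ m * ∑ j : Fin N, (v j : ℝ) * ((4 : ℝ) ^ ((j : ℕ) + 1))⁻¹)
          ∈ Set.Ico (0 : ℝ) (1 / 2)).card : ℝ)).card

namespace Stmt9

noncomputable def eta {N : ℕ} (v : Fin N → Fin 2) : ℝ :=
  ∑ j : Fin N, (v j : ℝ) * ((4 : ℝ) ^ ((j : ℕ) + 1))⁻¹

def c {N : ℕ} (v : Fin N → Fin 2) (j : ℕ) : ℕ :=
  if h : j < N then (v ⟨j, h⟩ : ℕ) else 0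

lemma c_le_one {N : ℕ} (v : Fin N → Fin 2) (j : ℕ) : c v j ≤ 1 := by
  unfold c; split
  · exact Nat.lt_succ_iff.mp (Fin.is_lt _)
  · exact Nat.zero_le _

lemma eta_eq {N : ℕ} (v : Fin N → Fin 2) :
    eta v = ∑ j ∈ range N, (c v j : ℝ) * ((4 : ℝ) ^ (j + 1))⁻¹ := by
  rw [eta, ← Fin.sum_univ_eq_sum_range (fun j => (c v j : ℝ) * ((4 : ℝ) ^ (j + 1))⁻¹) N]
  refine Finset.sum_congr rfl fun j _ => ?_
  simp [c, j.is_lt]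

noncomputable def Rs {N : ℕ} (v : Fin N → Fin 2) (a : ℕ) : ℝ :=
  ∑ j ∈ Ico a N, (c v j : ℝ) * ((4 : ℝ) ^ (j + 1 - a))⁻¹

lemma Rs_nonneg {N : ℕ} (v : Fin N → Fin 2) (a : ℕ) : 0 ≤ Rs v a := by
  refine Finset.sum_nonneg fun j _ => ?_
  positivity

lemma Rs_le {N : ℕ} (v : Fin N → Fin 2) (a : ℕ) : Rs v a ≤ 1 / 3 := by
  have h1 : Rs v a ≤ ∑ j ∈ Ico a N, ((4 : ℝ) ^ (j + 1 - a))⁻¹ := by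
    refine Finset.sum_le_sum fun j _ => ?_
    have hc : (c v j : ℝ) ≤ 1 := by exact_mod_cast c_le_one v j
    have h4 : (0:ℝ) ≤ ((4 : ℝ) ^ (j + 1 - a))⁻¹ := by positivity
    nlinarith
  refine h1.trans ?_
  rw [Finset.sum_Ico_eq_sum_range]
  have h2 : ∀ i ∈ range (N - a), ((4 : ℝ) ^ (a + i + 1 - a))⁻¹ = (1/4 : ℝ) ^ (i + 1) := by
    intro i _
    have : a + i + 1 - a = i + 1 := by omega
    rw [this]
    simp [inv_pow]
  rw [Finset.sum_congr rfl h2]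
  have key : ∀ n : ℕ, ∑ i ∈ range n, (1/4 : ℝ) ^ (i + 1) = (1 - (1/4:ℝ)^n)/3 := by
    intro n
    induction n with
    | zero => simp
    | succ n ih => rw [Finset.sum_range_succ, ih]; ring
  rw [key]
  have : (0:ℝ) ≤ (1/4:ℝ)^(N - a) := by positivity
  linarith

lemma Rs_succ {N : ℕ} (v : Fin N → Fin 2) (a : ℕ) (h : a < N) :
    Rs v a = (c v a : ℝ) / 4 + (1/4) * Rs v (a + 1) := by
  rw [Rs, Finset.sum_eq_sum_Ico_succ_bot h]
  have h0 : a + 1 - a = 1 := by omega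
  rw [h0]
  rw [Rs, Finset.mul_sum]
  congr 1
  · rw [pow_one]; ring
  refine Finset.sum_congr rfl fun j hj => ?_
  have hj' : a + 1 ≤ j := (Finset.mem_Ico.mp hj).1
  have e1 : j + 1 - a = (j + 1 - (a+1)) + 1 := by omega
  rw [e1, pow_succ, mul_inv]
  ring

lemma split {N : ℕ} (v : Fin N → Fin 2) (k : ℕ) (hk : k ≤ N) :
    ∃ A : ℕ, (4:ℝ) ^ k * eta v = A + Rs v k := by
  refine ⟨∑ j ∈ range k, c v j * 4 ^ (k - 1 - j), ?_⟩
  rw [eta_eq, Finset.mul_sum, range_eq_Ico,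
    ← Finset.sum_Ico_consecutive _ (Nat.zero_le k) hk]
  push_cast
  rw [Rs]
  congr 1
  · rw [← range_eq_Ico]
    refine Finset.sum_congr rfl fun j hj => ?_
    have hj : j < k := Finset.mem_range.mp hj
    have e : k = (k - 1 - j) + (j + 1) := by omega
    rw [e, pow_add]
    have : (0:ℝ) < (4:ℝ) ^ (j+1) := by positivity
    field_simp
    ring_nf
    congr 2
    omega
  · refine Finset.sum_congr rfl fun j hj => ?_
    have hj : k ≤ j := (Finset.mem_Ico.mp hj).1
    have e : j + 1 = (j + 1 - k) + k := by omega
    rw [e]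
    have e2 : j + 1 - k + k - k = j + 1 - k := by omega
    rw [e2, pow_add]
    have h1 : (0:ℝ) < (4:ℝ) ^ (j+1-k) := by positivity
    have h2 : (0:ℝ) < (4:ℝ) ^ k := by positivity
    field_simp

lemma fract_even {N : ℕ} (v : Fin N → Fin 2) (k : ℕ) (hk : k ≤ N) :
    Int.fract ((2:ℝ) ^ (2*k) * eta v) = Rs v k := by
  obtain ⟨A, hA⟩ := split v k hk
  have h2 : (2:ℝ) ^ (2*k) = (4:ℝ) ^ k := by
    rw [pow_mul]; norm_num
  rw [h2, hA]
  have : ((A:ℝ)) = ((A:ℤ):ℝ) := by push_cast; rfl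
  rw [this, Int.fract_intCast_add]
  exact Int.fract_eq_self.mpr ⟨Rs_nonneg v k, lt_of_le_of_lt (Rs_le v k) (by norm_num)⟩

lemma fract_odd {N : ℕ} (v : Fin N → Fin 2) (k : ℕ) (hk : k ≤ N) :
    Int.fract ((2:ℝ) ^ (2*k+1) * eta v) = 2 * Rs v k := by
  obtain ⟨A, hA⟩ := split v k hk
  have h2 : (2:ℝ) ^ (2*k+1) = 2 * (4:ℝ) ^ k := by
    rw [pow_succ, pow_mul]; norm_num; ring
  rw [h2, mul_assoc, hA, mul_add]
  have : (2:ℝ) * (A:ℝ) = ((2*A:ℤ):ℝ) := by push_cast; ring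
  rw [this, Int.fract_intCast_add]
  refine Int.fract_eq_self.mpr ⟨by linarith [Rs_nonneg v k], ?_⟩
  have := Rs_le v k
  linarith

def Zc {N : ℕ} (v : Fin N → Fin 2) : ℕ := (univ.filter fun j => v j = 0).card

lemma sum_range_double {M : Type*} [AddCommMonoid M] (f : ℕ → M) (n : ℕ) :
    ∑ m ∈ range (2*n), f m = ∑ k ∈ range n, (f (2*k) + f (2*k+1)) := by
  induction n with
  | zero => simp
  | succ n ih =>
    have h : 2*(n+1) = (2*n)+1+1 := by ring
    rw [h, Finset.sum_range_succ, Finset.sum_range_succ, ih, Finset.sum_range_succ]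
    rw [add_assoc]

lemma Zc_eq_sum {N : ℕ} (v : Fin N → Fin 2) :
    ∑ k ∈ range N, (if c v k = 0 then 1 else 0) = Zc v := by
  rw [Zc, Finset.card_filter,
    ← Fin.sum_univ_eq_sum_range (fun k => if c v k = 0 then 1 else 0) N]
  refine Finset.sum_congr rfl fun j _ => ?_
  have hc : c v (j:ℕ) = (v j : ℕ) := by simp [c, j.is_lt]
  rw [hc]
  refine if_congr ?_ rfl rfl
  exact (Fin.ext_iff (a := v j) (b := 0)).symm

open Classical in
lemma count_eq {N : ℕ} (v : Fin N → Fin 2) :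
    ((range (2*N)).filter fun m =>
        Int.fract ((2:ℝ)^m * eta v) ∈ Set.Ico (0:ℝ) (1/2)).card = N + Zc v := by
  rw [Finset.card_filter, sum_range_double
    (fun m => if Int.fract ((2:ℝ)^m * eta v) ∈ Set.Ico (0:ℝ) (1/2) then 1 else 0) N]
  have step : ∀ k ∈ range N,
      ((if Int.fract ((2:ℝ)^(2*k) * eta v) ∈ Set.Ico (0:ℝ) (1/2) then 1 else 0)
       + (if Int.fract ((2:ℝ)^(2*k+1) * eta v) ∈ Set.Ico (0:ℝ) (1/2) then 1 else 0))
      = 1 + (if c v k = 0 then 1 else 0) := by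
    intro k hk
    have hk' : k < N := mem_range.mp hk
    have hkN : k ≤ N := hk'.le
    rw [fract_even v k hkN, fract_odd v k hkN]
    have hRpos := Rs_nonneg v k
    have hfirst : (if Rs v k ∈ Set.Ico (0:ℝ) (1/2) then (1:ℕ) else 0) = 1 := by
      rw [if_pos]
      exact ⟨hRpos, lt_of_le_of_lt (Rs_le v k) (by norm_num)⟩
    rw [hfirst]
    congr 1
    rw [Rs_succ v k hk']
    simp only [Set.mem_Ico]
    have h'0 := Rs_nonneg v (k+1)
    have h'l := Rs_le v (k+1)
    by_cases h : c v k = 0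
    · rw [if_pos h, if_pos]
      rw [h]
      push_cast
      constructor
      · linarith
      · linarith
    · have h1 : c v k = 1 := by have := c_le_one v k; omega
      rw [if_neg h, if_neg]
      rw [h1]
      push_cast
      rintro ⟨-, hlt⟩
      linarith
  rw [Finset.sum_congr rfl step, Finset.sum_add_distrib, Finset.sum_const,
    Finset.card_range, Zc_eq_sum]
  simp

open Classical in
lemma goodCount_eq {N : ℕ} (hN : 0 < N) :
    goodCount N = ((univ : Finset (Fin N → Fin 2)).filter fun v => N ≤ 4 * Zc v).card := by
  unfold goodCount
  congr 1
  refine Finset.filter_congr fun v _ => ?_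
  have he : (∑ j : Fin N, (v j : ℝ) * ((4 : ℝ) ^ ((j : ℕ) + 1))⁻¹) = eta v := rfl
  simp only [he, count_eq v]
  have hNR : (0:ℝ) < N := by exact_mod_cast hN
  have h2N : (0:ℝ) < 2*N := by linarith
  rw [one_div, inv_mul_eq_div, le_div_iff₀ h2N]
  push_cast
  constructor
  · intro h
    have h2 : (N:ℝ) ≤ 4 * (Zc v : ℝ) := by linarith
    exact_mod_cast h2
  · intro h
    have h2 : (N:ℝ) ≤ 4 * (Zc v : ℝ) := by exact_mod_cast h
    linarith

noncomputable def eps (a : Fin 2) : ℝ := 1 - 2 * (a : ℝ)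

lemma eps_mul_self (a : Fin 2) : eps a * eps a = 1 := by
  fin_cases a <;> norm_num [eps]

lemma eps_flip (a : Fin 2) : eps (a + 1) = - eps a := by
  fin_cases a <;> norm_num [eps] <;> rfl

lemma sum_eps {N : ℕ} (v : Fin N → Fin 2) :
    ∑ j, eps (v j) = 2 * (Zc v : ℝ) - N := by
  have h1 : (Zc v : ℝ) = ∑ j : Fin N, (if v j = 0 then (1:ℝ) else 0) := by
    rw [Zc, Finset.card_filter]
    push_cast
    rfl
  have key : ∀ a : Fin 2, eps a = 2 * (if a = 0 then (1:ℝ) else 0) - 1 := by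
    intro a; fin_cases a <;> norm_num [eps]
  calc ∑ j, eps (v j)
      = ∑ j : Fin N, (2 * (if v j = 0 then (1:ℝ) else 0) - 1) :=
        Finset.sum_congr rfl fun j _ => key (v j)
    _ = 2 * (Zc v : ℝ) - N := by
        rw [Finset.sum_sub_distrib, ← Finset.mul_sum, ← h1]
        simp

lemma flipflip : ∀ a : Fin 2, a + 1 + 1 = a := by decide

lemma sum_sq (N : ℕ) :
    ∑ v : Fin N → Fin 2, (∑ j, eps (v j))^2 = N * 2^N := by
  have key : ∀ j k : Fin N, (∑ v : Fin N → Fin 2, eps (v j) * eps (v k))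
      = if j = k then (2:ℝ)^N else 0 := by
    intro j k
    by_cases h : j = k
    · subst h
      rw [if_pos rfl]
      calc ∑ v : Fin N → Fin 2, eps (v j) * eps (v j)
          = ∑ _v : Fin N → Fin 2, (1:ℝ) :=
            Finset.sum_congr rfl fun v _ => eps_mul_self (v j)
        _ = (2:ℝ)^N := by
            rw [Finset.sum_const, Finset.card_univ]
            simp [Fintype.card_fun]
    · rw [if_neg h]
      have hinv : Function.Involutive
          (fun v : Fin N → Fin 2 => Function.update v k (v k + 1)) := by
        intro v
        funext i
        by_cases hik : i = k
        · subst hik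
          simp [Function.update_self, flipflip]
        · simp [Function.update_of_ne hik]
      have hsum := Equiv.sum_comp (Function.Involutive.toPerm _ hinv)
          (fun v : Fin N → Fin 2 => eps (v j) * eps (v k))
      have hneg : ∀ v : Fin N → Fin 2,
          eps ((Function.update v k (v k + 1)) j) * eps ((Function.update v k (v k + 1)) k)
            = -(eps (v j) * eps (v k)) := by
        intro v
        rw [Function.update_of_ne h, Function.update_self, eps_flip]
        ring
      have hz : (∑ v : Fin N → Fin 2, eps (v j) * eps (v k))
           = -∑ v : Fin N → Fin 2, eps (v j) * eps (v k) := by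
        conv_lhs => rw [← hsum]
        rw [← Finset.sum_neg_distrib]
        refine Finset.sum_congr rfl fun v _ => ?_
        exact hneg v
      linarith
  calc ∑ v : Fin N → Fin 2, (∑ j, eps (v j))^2
      = ∑ v : Fin N → Fin 2, ∑ j : Fin N, ∑ k : Fin N, eps (v j) * eps (v k) := by
        refine Finset.sum_congr rfl fun v _ => ?_
        rw [sq, Finset.sum_mul_sum]
    _ = ∑ j : Fin N, ∑ k : Fin N, ∑ v : Fin N → Fin 2, eps (v j) * eps (v k) := by
        rw [Finset.sum_comm]
        exact Finset.sum_congr rfl fun j _ => Finset.sum_comm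
    _ = ∑ _j : Fin N, (2:ℝ)^N := by
        refine Finset.sum_congr rfl fun j _ => ?_
        rw [Finset.sum_congr rfl fun k _ => key j k]
        simp
    _ = N * 2^N := by
        rw [Finset.sum_const, Finset.card_univ]
        simp [nsmul_eq_mul]

end Stmt9

theorem stmt9 (ε : ℝ) (hε : 0 < ε) :
    ∃ N₀ : ℕ, ∀ N ≥ N₀, (1 - ε) * 2 ^ N < (goodCount N : ℝ) := by
  classical
  refine ⟨⌈4/ε⌉₊ + 1, fun N hN => ?_⟩
  have hN1 : 0 < N := by omega
  have hNR : (0:ℝ) < N := by exact_mod_cast hN1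
  have hNe : 4 / ε < N := by
    have h1 : (4/ε : ℝ) ≤ ⌈4/ε⌉₊ := Nat.le_ceil _
    have h2 : ((⌈4/ε⌉₊ : ℕ) : ℝ) + 1 ≤ N := by exact_mod_cast hN
    linarith
  have h4ε : 4 < ε * N := by
    rw [div_lt_iff₀ hε] at hNe; linarith
  set bad := (univ : Finset (Fin N → Fin 2)).filter (fun v => ¬ N ≤ 4 * Stmt9.Zc v) with hbad
  have hsplit : goodCount N + bad.card = 2^N := by
    rw [Stmt9.goodCount_eq hN1, hbad,
      Finset.card_filter_add_card_filter_not, Finset.card_univ]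
    simp [Fintype.card_fun]
  have h2pos : (0:ℝ) < 2^N := by positivity
  have hche : (bad.card : ℝ) * ((N:ℝ)^2/4) ≤ N * 2^N := by
    have h1 : ∀ v ∈ bad, ((N:ℝ)^2/4) ≤ (∑ j, Stmt9.eps (v j))^2 := by
      intro v hv
      rw [hbad, Finset.mem_filter] at hv
      have h2 : 4 * Stmt9.Zc v + 1 ≤ N := by omega
      have h3 : 4 * (Stmt9.Zc v:ℝ) + 1 ≤ N := by exact_mod_cast h2
      rw [Stmt9.sum_eps]
      nlinarith
    have h2 := Finset.card_nsmul_le_sum bad _ _ h1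
    have h3 : ∑ v ∈ bad, (∑ j, Stmt9.eps (v j))^2
        ≤ ∑ v : Fin N → Fin 2, (∑ j, Stmt9.eps (v j))^2 :=
      Finset.sum_le_sum_of_subset_of_nonneg (Finset.subset_univ _)
        (fun v _ _ => sq_nonneg _)
    rw [Stmt9.sum_sq] at h3
    calc (bad.card:ℝ) * ((N:ℝ)^2/4) = bad.card • ((N:ℝ)^2/4) := by
          rw [nsmul_eq_mul]
      _ ≤ _ := le_trans h2 h3
  have hgood : (goodCount N : ℝ) = 2^N - bad.card := by
    have hc := congrArg (Nat.cast : ℕ → ℝ) hsplit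
    push_cast at hc
    linarith
  rw [hgood]
  have hbadlt : (bad.card : ℝ) < ε * 2^N := by
    by_contra hcon
    push_neg at hcon
    have hh : ε * 2^N * ((N:ℝ)^2/4) ≤ N * 2^N := by
      refine le_trans ?_ hche
      have : (0:ℝ) ≤ (N:ℝ)^2/4 := by positivity
      nlinarith
    have hkey : 4 * ((N:ℝ) * 2^N / 4) < ε * N * ((N:ℝ) * 2^N / 4) :=
      mul_lt_mul_of_pos_right h4ε (by positivity)
    have he : ε * (N:ℝ) * ((N:ℝ) * 2^N / 4) = ε * 2^N * ((N:ℝ)^2/4) := by ring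
    rw [he] at hkey
    linarith
  linarith
end

section
/- Let s₀ and s₁ be bases and suppose that I is an s₀-adic interval of length s₀^{−⟨b;s₀⟩} for a positive integer b. Then for a = b + ⌈log s₀ + 3 log s₁⌉, there is an s₁-adic subinterval of I of length s₁^{−⟨a;s₁⟩}. -/
open Finset Real

/- `I = [c/s₀^M, (c+1)/s₀^M)` with `M = ⟨b;s₀⟩` is an `s₀`-adic interval of length
`s₀^{−⟨b;s₀⟩}`; the conclusion produces an `s₁`-adic subinterval of length `s₁^{−⟨a;s₁⟩}`
where `a = b + ⌈log s₀ + 3 log s₁⌉`. -/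
theorem stmt14 (s₀ s₁ : ℕ) (hs₀ : 2 ≤ s₀) (hs₁ : 2 ≤ s₁) (b : ℕ) (hb : 0 < b)
    (c : ℕ) (hc : c < s₀ ^ bRad b s₀) :
    ∃ d : ℕ, d < s₁ ^ bRad (b + ⌈Real.log s₀ + 3 * Real.log s₁⌉₊) s₁ ∧
      Set.Ico ((d : ℝ) / (s₁ : ℝ) ^ bRad (b + ⌈Real.log s₀ + 3 * Real.log s₁⌉₊) s₁)
          (((d : ℝ) + 1) / (s₁ : ℝ) ^ bRad (b + ⌈Real.log s₀ + 3 * Real.log s₁⌉₊) s₁)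
        ⊆ Set.Ico ((c : ℝ) / (s₀ : ℝ) ^ bRad b s₀) (((c : ℝ) + 1) / (s₀ : ℝ) ^ bRad b s₀) := by
  set M := bRad b s₀ with hM
  set a := b + ⌈Real.log s₀ + 3 * Real.log s₁⌉₊ with ha
  set N := bRad a s₁ with hN
  have hs₀R : (1:ℝ) < (s₀:ℝ) := by exact_mod_cast lt_of_lt_of_le one_lt_two hs₀
  have hs₁R : (1:ℝ) < (s₁:ℝ) := by exact_mod_cast lt_of_lt_of_le one_lt_two hs₁
  have hlogs₀ : 0 < Real.log s₀ := Real.log_pos hs₀R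
  have hlogs₁ : 0 < Real.log s₁ := Real.log_pos hs₁R
  have hA : (0:ℝ) < (s₀:ℝ) ^ M := by positivity
  have hB : (0:ℝ) < (s₁:ℝ) ^ N := by positivity
  -- Key inequality: 2 * s₀^M ≤ s₁^N
  have hkey : 2 * (s₀:ℝ) ^ M ≤ (s₁:ℝ) ^ N := by
    have h1 : (M:ℝ) * Real.log s₀ < (b:ℝ) + Real.log s₀ := by
      have hM' : (M:ℝ) < (b:ℝ) / Real.log s₀ + 1 := by
        rw [hM]; unfold bRad
        exact Nat.ceil_lt_add_one (by positivity)
      have := mul_lt_mul_of_pos_right hM' hlogs₀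
      calc (M:ℝ) * Real.log s₀ < ((b:ℝ) / Real.log s₀ + 1) * Real.log s₀ := this
        _ = (b:ℝ) + Real.log s₀ := by field_simp
    have h2 : (a:ℝ) ≤ (N:ℝ) * Real.log s₁ := by
      have hN' : (a:ℝ) / Real.log s₁ ≤ (N:ℝ) := by
        rw [hN]; unfold bRad; exact Nat.le_ceil _
      have := mul_le_mul_of_nonneg_right hN' hlogs₁.le
      rwa [div_mul_cancel₀ _ hlogs₁.ne'] at this
    have h3 : (b:ℝ) + (Real.log s₀ + 3 * Real.log s₁) ≤ (a:ℝ) := by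
      rw [ha]
      push_cast
      have := Nat.le_ceil (Real.log s₀ + 3 * Real.log s₁)
      linarith
    have hlog2 : Real.log 2 ≤ Real.log s₁ := by
      apply Real.log_le_log (by norm_num)
      exact_mod_cast hs₁
    have hcomb : Real.log 2 + (M:ℝ) * Real.log s₀ ≤ (N:ℝ) * Real.log s₁ := by
      linarith
    calc 2 * (s₀:ℝ) ^ M = Real.exp (Real.log 2 + (M:ℝ) * Real.log s₀) := by
          rw [Real.exp_add, Real.exp_log two_pos, ← Real.log_pow, Real.exp_log hA]
      _ ≤ Real.exp ((N:ℝ) * Real.log s₁) := Real.exp_le_exp.2 hcomb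
      _ = (s₁:ℝ) ^ N := by rw [← Real.log_pow, Real.exp_log hB]
  set d : ℕ := ⌈(c:ℝ) * (s₁:ℝ) ^ N / (s₀:ℝ) ^ M⌉₊ with hd
  have hd1 : (c:ℝ) * (s₁:ℝ) ^ N / (s₀:ℝ) ^ M ≤ (d:ℝ) := Nat.le_ceil _
  have hd2 : (d:ℝ) < (c:ℝ) * (s₁:ℝ) ^ N / (s₀:ℝ) ^ M + 1 :=
    Nat.ceil_lt_add_one (by positivity)
  have hcB : (c:ℝ) ≤ (s₀:ℝ) ^ M - 1 := by
    have : (c:ℝ) + 1 ≤ (s₀:ℝ) ^ M := by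
      have : (c + 1 : ℕ) ≤ s₀ ^ M := hc
      exact_mod_cast this
    linarith
  have hratio : 2 ≤ (s₁:ℝ) ^ N / (s₀:ℝ) ^ M := by
    rw [le_div_iff₀ hA]; linarith
  have hdlt : (d:ℝ) < (s₁:ℝ) ^ N := by
    have hmono : (c:ℝ) * (s₁:ℝ) ^ N / (s₀:ℝ) ^ M
        ≤ ((s₀:ℝ) ^ M - 1) * (s₁:ℝ) ^ N / (s₀:ℝ) ^ M := by
      gcongr <;> linarith
    have heq : ((s₀:ℝ) ^ M - 1) * (s₁:ℝ) ^ N / (s₀:ℝ) ^ M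
        = (s₁:ℝ) ^ N - (s₁:ℝ) ^ N / (s₀:ℝ) ^ M := by
      field_simp
    linarith
  refine ⟨d, ?_, ?_⟩
  · have : (d:ℝ) < ((s₁ ^ N : ℕ) : ℝ) := by push_cast; exact hdlt
    exact_mod_cast this
  · rintro x ⟨hx1, hx2⟩
    have hd1' : (c:ℝ) * (s₁:ℝ) ^ N ≤ (d:ℝ) * (s₀:ℝ) ^ M := by
      rw [div_le_iff₀ hA] at hd1; linarith
    constructor
    · have hle : (c:ℝ) / (s₀:ℝ) ^ M ≤ (d:ℝ) / (s₁:ℝ) ^ N := by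
        rw [div_le_div_iff₀ hA hB]; linarith
      linarith
    · have hle : ((d:ℝ) + 1) / (s₁:ℝ) ^ N ≤ ((c:ℝ) + 1) / (s₀:ℝ) ^ M := by
        rw [div_le_div_iff₀ hB hA]
        have hd2' : (d:ℝ) * (s₀:ℝ) ^ M < (c:ℝ) * (s₁:ℝ) ^ N + (s₀:ℝ) ^ M := by
          have := mul_lt_mul_of_pos_right hd2 hA
          rwa [add_mul, one_mul, div_mul_cancel₀ _ hA.ne'] at this
        nlinarith
      linarith
end
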